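/- arXiv:1003.4333 — 14 statements merged into one kernel-verified Lean document; each statement's English description precedes it below -/
import Mathlib

section
/- Let K ⊆ L be a finite separable extension of F-finite fields of characteristic p > 0, and let e ≥ 1. If e₁^{1/p^e}, ..., eₙ^{1/p^e} form a basis for K^{1/p^e} over K, then they also form a basis for L^{1/p^e} over L. Equivalently, the natural map K^{1/p^e} ⊗_K L → L^{1/p^e} is an isomorphism. -/
open scoped TensorProduct

/-- In a finite separable extension `L/K` in characteristic `p`, every element of `L`
lies in the `K`-span of the `p^e`-th powers. -/
lemma aux_mem_span_pow_of_separable (p : ℕ) [Fact p.Prime] (e : ℕ)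
    (K L : Type) [Field K] [Field L] [Algebra K L] [CharP K p]
    [FiniteDimensional K L] [Algebra.IsSeparable K L] (a : L) :
    a ∈ Submodule.span K (Set.range fun x : L => x ^ p ^ e) := by
  haveI : CharP L p := charP_of_injective_algebraMap (algebraMap K L).injective p
  haveI : Algebra.IsAlgebraic K L := Algebra.IsAlgebraic.of_finite K L
  set S : Set L := Set.range fun x : L => x ^ p ^ e with hS
  let M : Submonoid L :=
    { carrier := S
      mul_mem' := by rintro _ _ ⟨x, rfl⟩ ⟨y, rfl⟩; exact ⟨x * y, mul_pow ..⟩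
      one_mem' := ⟨1, one_pow _⟩ }
  have hclos : (Submonoid.closure S : Set L) ⊆ S :=
    Submonoid.closure_le (S := M).2 le_rfl
  have hspan : Subalgebra.toSubmodule (Algebra.adjoin K S) = Submodule.span K S := by
    rw [Algebra.adjoin_eq_span]
    exact le_antisymm (Submodule.span_mono hclos)
      (Submodule.span_mono Submonoid.subset_closure)
  have hinv : ∀ x ∈ Algebra.adjoin K S, x⁻¹ ∈ Algebra.adjoin K S := fun x hx =>
    Subalgebra.inv_mem_of_algebraic (A := Algebra.adjoin K S) (x := ⟨x, hx⟩)
      (Algebra.IsAlgebraic.isAlgebraic x)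
  set M' : IntermediateField K L := IntermediateField.adjoin K S with hM'
  haveI : Algebra.IsSeparable M' L := Algebra.isSeparable_tower_top_of_isSeparable K M' L
  haveI : CharP M' p := charP_of_injective_algebraMap (algebraMap K M').injective p
  haveI : IsPurelyInseparable M' L := by
    refine (isPurelyInseparable_iff_pow_mem M' p).2 fun x => ⟨e, ?_⟩
    exact ⟨⟨x ^ p ^ e, IntermediateField.subset_adjoin K S ⟨x, rfl⟩⟩, rfl⟩
  obtain ⟨y, hy⟩ := IsPurelyInseparable.surjective_algebraMap_of_isSeparable M' L a
  have haM : a ∈ M' := hy ▸ y.2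
  have : a ∈ Algebra.adjoin K S := by
    rw [← IntermediateField.adjoin_eq_algebra_adjoin K S hinv]
    exact haM
  rw [← hspan]
  exact this

/-- The degree of `Lr = L^{1/p^e}` over `Kr = K^{1/p^e}` equals the degree of `L` over `K`. -/
lemma aux_finrank_roots (p : ℕ) [Fact p.Prime] (e : ℕ)
    (K L Kr Lr : Type) [Field K] [Field L] [Field Kr] [Field Lr]
    [Algebra K L] [Algebra K Kr] [Algebra L Lr] [Algebra Kr Lr] [Algebra K Lr]
    [IsScalarTower K L Lr] [IsScalarTower K Kr Lr]
    [CharP K p] [FiniteDimensional K L]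
    (hKr : ∀ x : Kr, x ^ p ^ e ∈ (algebraMap K Kr).range)
    (hKr' : ∀ a : K, ∃ x : Kr, x ^ p ^ e = algebraMap K Kr a)
    (hLr : ∀ x : Lr, x ^ p ^ e ∈ (algebraMap L Lr).range)
    (hLr' : ∀ a : L, ∃ x : Lr, x ^ p ^ e = algebraMap L Lr a) :
    Module.finrank Kr Lr = Module.finrank K L := by
  classical
  haveI : CharP Lr p := charP_of_injective_algebraMap (algebraMap K Lr).injective p
  haveI : CharP Kr p := charP_of_injective_algebraMap (algebraMap K Kr).injective p
  haveI : CharP L p := charP_of_injective_algebraMap (algebraMap K L).injective p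
  have hpe : p ^ e ≠ 0 := pow_ne_zero _ (Fact.out (p := p.Prime)).ne_zero
  have hq : Function.Injective fun x : Lr => x ^ p ^ e := by
    have := (iterateFrobenius Lr p e).injective
    exact fun a b h => this (by simpa [iterateFrobenius_def] using h)
  set bL := Module.finBasis K L with hbL
  choose u hu using fun i => hLr' (bL i)
  -- key computation
  have key : ∀ (s : Finset (Fin (Module.finrank K L))) (g : Fin (Module.finrank K L) → Kr)
      (a : Fin (Module.finrank K L) → K),
      (∀ i, algebraMap K Kr (a i) = g i ^ p ^ e) →
      (∑ i ∈ s, g i • u i) ^ p ^ e = algebraMap L Lr (∑ i ∈ s, a i • bL i) := by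
    intro s g a ha
    rw [sum_pow_char_pow, map_sum]
    refine Finset.sum_congr rfl fun j _ => ?_
    rw [smul_pow, ← ha j, hu j, algebraMap_smul, Algebra.smul_def, Algebra.smul_def,
      map_mul, ← IsScalarTower.algebraMap_apply K L Lr]
  have hind : LinearIndependent Kr u := by
    rw [linearIndependent_iff']
    intro s g hg i hi
    choose a ha using fun i => hKr (g i)
    have h2 := key s g a ha
    rw [hg, zero_pow hpe] at h2
    have h3 : (∑ i ∈ s, a i • bL i) = 0 := by
      apply (algebraMap L Lr).injective
      rw [map_zero, ← h2]
    have h4 := linearIndependent_iff'.1 bL.linearIndependent s a h3 i hi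
    have h5 : g i ^ p ^ e = 0 := by rw [← ha i, h4, map_zero]
    exact pow_eq_zero_iff hpe |>.1 h5
  have hsp : ⊤ ≤ Submodule.span Kr (Set.range u) := by
    intro x _
    obtain ⟨a, ha⟩ := hLr x
    choose c hc using fun i => hKr' (bL.repr a i)
    have hx : x = ∑ i, c i • u i := by
      apply hq
      have := key Finset.univ c (fun i => bL.repr a i) (fun i => (hc i).symm)
      simp only at this ⊢
      rw [this, Module.Basis.sum_repr bL a, ← ha]
    rw [hx]
    exact Submodule.sum_mem _ fun i _ =>
      Submodule.smul_mem _ _ (Submodule.subset_span ⟨i, rfl⟩)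
  let bLr : Module.Basis (Fin (Module.finrank K L)) Kr Lr := Module.Basis.mk hind hsp
  rw [Module.finrank_eq_card_basis bLr, Fintype.card_fin]

/-- Let `K ⊆ L` be a finite separable extension of `F`-finite fields of
characteristic `p > 0` and `e ≥ 1`.  Here `Kr` plays the role of `K^{1/p^e}` and `Lr` that of
`L^{1/p^e}` (each characterized as the field of `p^e`-th roots of `K`, resp. `L`).
Then any basis of `K^{1/p^e}` over `K` is also a basis of `L^{1/p^e}` over `L`; equivalently,
the natural map `K^{1/p^e} ⊗_K L → L^{1/p^e}` is an isomorphism. -/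
theorem basis_of_roots_stable_under_separable_extension
    (p : ℕ) [Fact p.Prime] (e : ℕ) (he : 1 ≤ e)
    (K L Kr Lr : Type) [Field K] [Field L] [Field Kr] [Field Lr]
    [Algebra K L] [Algebra K Kr] [Algebra L Lr] [Algebra Kr Lr] [Algebra K Lr]
    [IsScalarTower K L Lr] [IsScalarTower K Kr Lr]
    [CharP K p]
    -- the extension `K ⊆ L` is finite and separable
    [FiniteDimensional K L] [Algebra.IsSeparable K L]
    -- `F`-finiteness of `K` and `L`
    [FiniteDimensional K Kr] [FiniteDimensional L Lr]
    -- `Kr = K^{1/p^e}`: every element of `Kr` is a `p^e`-th root of an element of `K`,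
    -- and every element of `K` admits a `p^e`-th root in `Kr`
    (hKr : ∀ x : Kr, x ^ p ^ e ∈ (algebraMap K Kr).range)
    (hKr' : ∀ a : K, ∃ x : Kr, x ^ p ^ e = algebraMap K Kr a)
    -- `Lr = L^{1/p^e}`
    (hLr : ∀ x : Lr, x ^ p ^ e ∈ (algebraMap L Lr).range)
    (hLr' : ∀ a : L, ∃ x : Lr, x ^ p ^ e = algebraMap L Lr a) :
    (∀ (ι : Type) (b : Module.Basis ι K Kr),
        LinearIndependent L (fun i : ι => algebraMap Kr Lr (b i)) ∧
        Submodule.span L (Set.range fun i : ι => algebraMap Kr Lr (b i)) = ⊤) ∧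
    Function.Bijective
      (Algebra.TensorProduct.productMap (IsScalarTower.toAlgHom K Kr Lr)
        (IsScalarTower.toAlgHom K L Lr)) := by
  classical
  haveI : CharP Lr p := charP_of_injective_algebraMap (algebraMap K Lr).injective p
  haveI : CharP Kr p := charP_of_injective_algebraMap (algebraMap K Kr).injective p
  haveI : CharP L p := charP_of_injective_algebraMap (algebraMap K L).injective p
  have hpe : p ^ e ≠ 0 := pow_ne_zero _ (Fact.out (p := p.Prime)).ne_zero
  have hq : Function.Injective fun x : Lr => x ^ p ^ e := by
    have := (iterateFrobenius Lr p e).injective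
    exact fun a b h => this (by simpa [iterateFrobenius_def] using h)
  -- the `L`-algebra map `ψ : L ⊗[K] Kr → Lr`
  let ψ : L ⊗[K] Kr →ₐ[L] Lr :=
    Algebra.TensorProduct.lift (Algebra.ofId L Lr) (IsScalarTower.toAlgHom K Kr Lr)
      (fun _ _ => Commute.all _ _)
  have hψ_tmul : ∀ (l : L) (y : Kr), ψ (l ⊗ₜ y) = algebraMap L Lr l * algebraMap Kr Lr y :=
    fun l y => Algebra.TensorProduct.lift_tmul ..
  -- surjectivity of ψ
  have hψsurj : Function.Surjective ψ := by
    intro x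
    obtain ⟨a, ha⟩ := hLr x
    have key : ∀ b ∈ Submodule.span K (Set.range fun y : L => y ^ p ^ e),
        ∃ z : L ⊗[K] Kr, (ψ z) ^ p ^ e = algebraMap L Lr b := by
      intro b hb
      induction hb using Submodule.span_induction with
      | mem y hy =>
        obtain ⟨w, rfl⟩ := hy
        refine ⟨w ⊗ₜ 1, ?_⟩
        rw [hψ_tmul, map_one, mul_one, ← map_pow]
      | zero => exact ⟨0, by rw [map_zero, zero_pow hpe, map_zero]⟩
      | add y₁ y₂ h₁ h₂ ih₁ ih₂ =>
        obtain ⟨z₁, hz₁⟩ := ih₁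
        obtain ⟨z₂, hz₂⟩ := ih₂
        exact ⟨z₁ + z₂, by rw [map_add, add_pow_char_pow, hz₁, hz₂, ← map_add]⟩
      | smul k y hy ih =>
        obtain ⟨z, hz⟩ := ih
        obtain ⟨c, hc⟩ := hKr' k
        refine ⟨(1 ⊗ₜ c) * z, ?_⟩
        rw [map_mul, mul_pow, hz, hψ_tmul, map_one, one_mul, ← map_pow, hc,
          ← IsScalarTower.algebraMap_apply K Kr Lr, Algebra.smul_def, map_mul,
          ← IsScalarTower.algebraMap_apply K L Lr]
    obtain ⟨z, hz⟩ := key a (aux_mem_span_pow_of_separable p e K L a)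
    exact ⟨z, hq (show ψ z ^ p ^ e = x ^ p ^ e by rw [hz, ha])⟩
  -- dimension count
  have hfr : Module.finrank Kr Lr = Module.finrank K L :=
    aux_finrank_roots p e K L Kr Lr hKr hKr' hLr hLr'
  haveI : FiniteDimensional K Lr := Module.Finite.trans L Lr
  haveI : FiniteDimensional Kr Lr := FiniteDimensional.right K Kr Lr
  have htow1 : Module.finrank K Kr * Module.finrank Kr Lr = Module.finrank K Lr :=
    Module.finrank_mul_finrank K Kr Lr
  have htow2 : Module.finrank K L * Module.finrank L Lr = Module.finrank K Lr :=
    Module.finrank_mul_finrank K L Lr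
  have hdim : Module.finrank L Lr = Module.finrank K Kr := by
    have hpos : 0 < Module.finrank K L := Module.finrank_pos
    apply Nat.eq_of_mul_eq_mul_left hpos
    rw [htow2, ← htow1, hfr, Nat.mul_comm]
  -- ψ is bijective
  haveI : FiniteDimensional L (L ⊗[K] Kr) :=
    Module.Finite.of_basis ((Module.finBasis K Kr).baseChange L)
  have hdim' : Module.finrank L (L ⊗[K] Kr) = Module.finrank L Lr := by
    rw [Module.finrank_eq_card_basis ((Module.finBasis K Kr).baseChange L),
      Fintype.card_fin, hdim]
  have hψbij : Function.Bijective ψ := by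
    refine ⟨?_, hψsurj⟩
    have : Function.Surjective ψ.toLinearMap := hψsurj
    exact (LinearMap.injective_iff_surjective_of_finrank_eq_finrank hdim').2 this
  let eqv : (L ⊗[K] Kr) ≃ₗ[L] Lr := LinearEquiv.ofBijective ψ.toLinearMap hψbij
  constructor
  · intro ι b
    let bb : Module.Basis ι L Lr := (b.baseChange L).map eqv
    have hbb : (fun i : ι => algebraMap Kr Lr (b i)) = ⇑bb := by
      funext i
      show algebraMap Kr Lr (b i) = eqv ((b.baseChange L) i)
      rw [Module.Basis.baseChange_apply]
      show algebraMap Kr Lr (b i) = ψ ((1 : L) ⊗ₜ b i)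
      rw [hψ_tmul, map_one, one_mul]
    rw [hbb]
    exact ⟨bb.linearIndependent, bb.span_eq⟩
  · have hT : ⇑(Algebra.TensorProduct.productMap (IsScalarTower.toAlgHom K Kr Lr)
        (IsScalarTower.toAlgHom K L Lr)) =
        ⇑ψ ∘ ⇑(Algebra.TensorProduct.comm K Kr L) := by
      funext w
      induction w using TensorProduct.induction_on with
      | zero => simp
      | tmul y l =>
        simp only [Function.comp_apply, Algebra.TensorProduct.comm_tmul,
          Algebra.TensorProduct.productMap_apply_tmul, hψ_tmul]
        exact (mul_comm _ _)
      | add w₁ w₂ ih₁ ih₂ =>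
        simp only [map_add, Function.comp_apply] at ih₁ ih₂ ⊢
        rw [ih₁, ih₂]
    rw [hT]
    exact hψbij.comp (Algebra.TensorProduct.comm K Kr L).bijective
end

section
/- Let K ⊆ L be a finite separable extension of F-finite fields of characteristic p > 0. Then every K-linear map φ : K^{1/p^e} → K extends uniquely to an L-linear map φ̄ : L^{1/p^e} → L (i.e., φ̄ restricted to K^{1/p^e} equals φ). -/
open Module

/-- If `E = F^{1/p^e}`, then `rank_F E = rank_{F^{p^e}} F`. -/
lemma aux_rank_root (p : ℕ) [Fact p.Prime] (e : ℕ) (F E : Type) [Field F] [Field E]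
    [Algebra F E] [CharP F p]
    (h1 : ∀ x : E, x ^ p ^ e ∈ (algebraMap F E).range)
    (h2 : ∀ a : F, ∃ x : E, x ^ p ^ e = algebraMap F E a) :
    Module.rank F E = Module.rank (iterateFrobenius F p e).fieldRange F := by
  haveI : CharP E p := charP_of_injective_algebraMap (algebraMap F E).injective p
  set q := p ^ e with hq
  have algInj := (algebraMap F E).injective
  have frobEinj : Function.Injective (fun x : E => x ^ q) := by
    have := (iterateFrobenius E p e).injective
    simpa [Function.Injective, iterateFrobenius_def] using this
  have frobFinj : Function.Injective (fun x : F => x ^ q) := by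
    have := (iterateFrobenius F p e).injective
    simpa [Function.Injective, iterateFrobenius_def] using this
  -- the descent map
  set g : E → F := fun x => Classical.choose (h1 x) with hg
  have hgspec : ∀ x : E, algebraMap F E (g x) = x ^ q := fun x =>
    Classical.choose_spec (h1 x)
  have hj : Function.Bijective g := by
    constructor
    · intro x y hxy
      apply frobEinj
      simp only [← hgspec, hxy]
    · intro a
      obtain ⟨x, hx⟩ := h2 a
      exact ⟨x, algInj (by rw [hgspec, hx])⟩
  have hgadd : ∀ x y : E, g (x + y) = g x + g y := by
    intro x y
    apply algInj
    rw [map_add, hgspec, hgspec, hgspec, add_pow_char_pow]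
  have hg0 : g 0 = 0 := by
    apply algInj
    rw [hgspec, map_zero, zero_pow (pow_ne_zero e (Fact.out : p.Prime).ne_zero)]
  let j : E ≃+ F :=
    { toFun := g
      invFun := Function.surjInv hj.2
      left_inv := Function.leftInverse_surjInv hj
      right_inv := Function.rightInverse_surjInv hj.2
      map_add' := hgadd }
  let i : ZeroHom F (iterateFrobenius F p e).fieldRange :=
    ⟨fun a => ⟨iterateFrobenius F p e a, RingHom.mem_fieldRange_self _ _⟩, by
      ext; simp⟩
  have ibij : Function.Bijective i := by
    constructor
    · intro x y hxy
      exact (iterateFrobenius F p e).injective (congrArg Subtype.val hxy)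
    · rintro ⟨-, y, rfl⟩
      exact ⟨y, rfl⟩
  refine rank_eq_of_equiv_equiv (i : ZeroHom F _) j ibij ?_
  intro r m
  have hsmul : (i r) • (j m) = (r ^ q) * g m := by
    have : ((i r : (iterateFrobenius F p e).fieldRange) : F) = r ^ q := by
      simp [i, iterateFrobenius_def, hq]
    rw [Subring.smul_def]
    norm_cast
  rw [hsmul]
  show g (r • m) = r ^ q * g m
  apply algInj
  rw [hgspec, Algebra.smul_def, mul_pow, map_mul, hgspec, map_pow]


open Cardinal

lemma aux_rank_range (K L : Type) [Field K] [Field L] [Algebra K L] :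
    Module.rank K L = Module.rank (algebraMap K L).fieldRange L := by
  let i : ZeroHom K (algebraMap K L).fieldRange :=
    ⟨fun a => ⟨algebraMap K L a, RingHom.mem_fieldRange_self _ _⟩, by ext; simp⟩
  have ibij : Function.Bijective i := by
    constructor
    · intro x y hxy
      exact (algebraMap K L).injective (congrArg Subtype.val hxy)
    · rintro ⟨-, y, rfl⟩
      exact ⟨y, rfl⟩
  refine rank_eq_of_equiv_equiv (i : ZeroHom K _) (AddEquiv.refl L) ibij ?_
  intro r m
  rw [Subring.smul_def]
  show r • m = (algebraMap K L r) • m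
  rw [Algebra.smul_def, smul_eq_mul]

set_option maxHeartbeats 1000000 in
lemma aux_rank_main (p : ℕ) [Fact p.Prime] (e : ℕ) (K L : Type) [Field K] [Field L]
    [Algebra K L] [CharP K p] [CharP L p] [FiniteDimensional K L]
    (hfinK : Module.rank (iterateFrobenius K p e).fieldRange K < ℵ₀)
    (hfinL : Module.rank (iterateFrobenius L p e).fieldRange L < ℵ₀) :
    Module.rank (iterateFrobenius L p e).fieldRange L
      = Module.rank (iterateFrobenius K p e).fieldRange K := by
  set q := p ^ e with hq
  have hfrobL : ∀ x : L, iterateFrobenius L p e x = x ^ q := fun x => iterateFrobenius_def p e x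
  have hfrobK : ∀ x : K, iterateFrobenius K p e x = x ^ q := fun x => iterateFrobenius_def p e x
  set K0 : Subfield K := (iterateFrobenius K p e).fieldRange with hK0
  set L0 : Subfield L := (iterateFrobenius L p e).fieldRange with hL0
  set A : Subfield L := (algebraMap K L).fieldRange with hA
  set B : Subfield L := A.map (iterateFrobenius L p e) with hB
  have hBA : B ≤ A := by
    rintro - ⟨-, ⟨k, rfl⟩, rfl⟩
    exact ⟨k ^ q, by rw [map_pow, hfrobL]⟩
  have hBL0 : B ≤ L0 := by
    rintro - ⟨a, -, rfl⟩
    exact ⟨a, rfl⟩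
  letI : Algebra B A := (Subfield.inclusion hBA).toAlgebra
  letI : Algebra B L0 := (Subfield.inclusion hBL0).toAlgebra
  haveI : IsScalarTower B A L := IsScalarTower.of_algebraMap_eq fun b => rfl
  haveI : IsScalarTower B L0 L := IsScalarTower.of_algebraMap_eq fun b => rfl
  have t1 : Module.rank B A * Module.rank A L = Module.rank B L := rank_mul_rank B A L
  have t2 : Module.rank B L0 * Module.rank L0 L = Module.rank B L := rank_mul_rank B L0 L
  have frobLinj := (iterateFrobenius L p e).injective
  -- e1 : rank A L = rank B L0 via Frobenius
  have e1 : Module.rank A L = Module.rank B L0 := by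
    let i : ZeroHom A B :=
      ⟨fun a => ⟨iterateFrobenius L p e a, ⟨a, a.2, rfl⟩⟩, by ext; simp⟩
    have ibij : Function.Bijective i := by
      constructor
      · intro x y hxy
        exact Subtype.ext (frobLinj (congrArg Subtype.val hxy))
      · rintro ⟨-, a, ha, rfl⟩
        exact ⟨⟨a, ha⟩, rfl⟩
    let j0 : L →+ L0 :=
      { toFun := fun x => ⟨iterateFrobenius L p e x, RingHom.mem_fieldRange_self _ _⟩
        map_zero' := Subtype.ext (map_zero _)
        map_add' := fun x y => Subtype.ext (map_add _ x y) }
    have j0bij : Function.Bijective j0 := by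
      constructor
      · intro x y hxy
        exact frobLinj (congrArg Subtype.val hxy)
      · rintro ⟨-, a, rfl⟩
        exact ⟨a, rfl⟩
    refine rank_eq_of_equiv_equiv (i : ZeroHom A _) (AddEquiv.ofBijective j0 j0bij) ibij ?_
    intro r m
    apply Subtype.ext
    show iterateFrobenius L p e ((r : L) * m) = (i r : L) * iterateFrobenius L p e m
    rw [map_mul]
    rfl
  -- e2 : rank B A = rank K0 K
  have e2 : Module.rank K0 K = Module.rank B A := by
    let i : ZeroHom K0 B :=
      ⟨fun k0 => ⟨algebraMap K L k0, by
        obtain ⟨k, hk⟩ := k0.2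
        exact ⟨algebraMap K L k, ⟨k, rfl⟩, by rw [← hk, hfrobK, hfrobL, map_pow]⟩⟩, by ext; simp⟩
    have ibij : Function.Bijective i := by
      constructor
      · intro x y hxy
        exact Subtype.ext ((algebraMap K L).injective (congrArg Subtype.val hxy))
      · rintro ⟨-, -, ⟨k, rfl⟩, rfl⟩
        exact ⟨⟨k ^ q, ⟨k, hfrobK k⟩⟩, Subtype.ext (by
          show algebraMap K L (k ^ q) = iterateFrobenius L p e (algebraMap K L k)
          rw [map_pow, hfrobL])⟩
    let j0 : K →+ A :=
      { toFun := fun x => ⟨algebraMap K L x, RingHom.mem_fieldRange_self _ _⟩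
        map_zero' := Subtype.ext (map_zero _)
        map_add' := fun x y => Subtype.ext (map_add _ x y) }
    have j0bij : Function.Bijective j0 := by
      constructor
      · intro x y hxy
        exact (algebraMap K L).injective (congrArg Subtype.val hxy)
      · rintro ⟨-, k, rfl⟩
        exact ⟨k, rfl⟩
    refine rank_eq_of_equiv_equiv (i : ZeroHom K0 _) (AddEquiv.ofBijective j0 j0bij) ibij ?_
    intro r m
    apply Subtype.ext
    show algebraMap K L ((r : K) * m) = (i r : L) * algebraMap K L m
    rw [map_mul]
    rfl
  -- finiteness and positivity of rank A L
  have hAL : Module.rank K L = Module.rank A L := aux_rank_range K L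
  have hALfin : Module.rank A L < ℵ₀ := hAL ▸ Module.rank_lt_aleph0 K L
  have hALne : Module.rank A L ≠ 0 := by
    rw [← hAL]
    exact rank_pos.ne'
  -- combine
  have key : Module.rank B A * Module.rank A L = Module.rank A L * Module.rank L0 L := by
    rw [t1, ← t2, e1, mul_comm]
  have hBAfin : Module.rank B A < ℵ₀ := e2 ▸ hfinK
  have keyN : (Module.rank B A).toNat * (Module.rank A L).toNat
      = (Module.rank A L).toNat * (Module.rank L0 L).toNat := by
    rw [← toNat_mul, ← toNat_mul, key]
  have hpos : 0 < (Module.rank A L).toNat := toNat_pos.mpr ⟨hALne, hALfin⟩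
  have : (Module.rank L0 L).toNat = (Module.rank B A).toNat :=
    Nat.eq_of_mul_eq_mul_left hpos (by rw [← keyN]; ring)
  rw [e2]
  apply Cardinal.toNat_injOn (Set.mem_Iio.mpr hfinL) (Set.mem_Iio.mpr hBAfin) this

set_option maxHeartbeats 1000000 in
lemma aux_span (p : ℕ) [Fact p.Prime] (e : ℕ)
    (K L Kr Lr : Type) [Field K] [Field L] [Field Kr] [Field Lr]
    [Algebra K L] [Algebra K Kr] [Algebra L Lr] [Algebra Kr Lr] [Algebra K Lr]
    [IsScalarTower K L Lr] [IsScalarTower K Kr Lr]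
    [CharP K p]
    [FiniteDimensional K L] [Algebra.IsSeparable K L]
    (hKr' : ∀ a : K, ∃ x : Kr, x ^ p ^ e = algebraMap K Kr a)
    (hLr' : ∀ a : L, ∃ x : Lr, x ^ p ^ e = algebraMap L Lr a)
    (hLr : ∀ x : Lr, x ^ p ^ e ∈ (algebraMap L Lr).range) :
    Submodule.span L (Set.range (algebraMap Kr Lr)) = ⊤ := by
  haveI : CharP L p := charP_of_injective_algebraMap (algebraMap K L).injective p
  haveI : CharP Lr p := charP_of_injective_algebraMap (algebraMap L Lr).injective p
  set q := p ^ e with hq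
  have frobLrInj : Function.Injective (fun x : Lr => x ^ q) := by
    have := (iterateFrobenius Lr p e).injective
    simpa [Function.Injective, iterateFrobenius_def] using this
  set M := Submodule.span L (Set.range (algebraMap Kr Lr)) with hM
  -- M is closed under multiplication by elements of Kr
  have mulmem : ∀ (κ : Kr), ∀ m ∈ M, algebraMap Kr Lr κ * m ∈ M := by
    intro κ m hm
    induction hm using Submodule.span_induction with
    | mem x hx =>
      obtain ⟨y, rfl⟩ := hx
      rw [← map_mul]
      exact Submodule.subset_span ⟨κ * y, rfl⟩
    | zero => rw [mul_zero]; exact Submodule.zero_mem M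
    | add x y _ _ hx hy => rw [mul_add]; exact Submodule.add_mem M hx hy
    | smul l x _ hx => rw [Algebra.mul_smul_comm]; exact Submodule.smul_mem M l hx
  -- every element of L is in the K-span of q-th powers
  set S : Set L := Set.range (fun l : L => l ^ q) with hS
  have hcspan : ∀ c : L, c ∈ Submodule.span K S := by
    intro c
    set A : IntermediateField K L := IntermediateField.adjoin K S with hA
    haveI : CharP A p := charP_of_injective_algebraMap (algebraMap K A).injective p
    haveI : IsPurelyInseparable A L := by
      rw [isPurelyInseparable_iff_pow_mem A p]
      intro x
      exact ⟨e, ⟨⟨x ^ q, IntermediateField.subset_adjoin K S ⟨x, rfl⟩⟩, rfl⟩⟩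
    haveI : Algebra.IsSeparable A L := Algebra.isSeparable_tower_top_of_isSeparable K A L
    obtain ⟨a, rfl⟩ := IsPurelyInseparable.surjective_algebraMap_of_isSeparable A L c
    have hmemA : (algebraMap A L a : L) ∈ A := a.2
    have hAS : A.toSubalgebra = Algebra.adjoin K S :=
      IntermediateField.adjoin_toSubalgebra_of_isAlgebraic
        (fun x _ => Algebra.IsAlgebraic.isAlgebraic x)
    have hmem2 : (algebraMap A L a : L) ∈ Algebra.adjoin K S := by
      rw [← hAS]; exact hmemA
    have hNS : S = ↑(MonoidHom.mrange (powMonoidHom q : L →* L)) := by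
      ext x; simp [hS, powMonoidHom]
    have := Algebra.adjoin_eq_span (R := K) (s := S)
    have hmem3 : (algebraMap A L a : L) ∈
        Submodule.span K (↑(Submonoid.closure S) : Set L) := by
      rw [← this]; exact hmem2
    rwa [hNS, Submonoid.closure_eq, ← hNS] at hmem3
  -- main claim
  have main : ∀ y : Lr, y ∈ M := by
    intro y
    obtain ⟨c, hc⟩ := hLr y
    have : ∀ c : L, ∀ y : Lr, y ^ q = algebraMap L Lr c → y ∈ M := by
      intro c
      have hcs := hcspan c
      induction hcs using Submodule.span_induction with
      | mem x hx =>
        obtain ⟨l, rfl⟩ := hx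
        intro y hy
        have : y = algebraMap L Lr l := by
          apply frobLrInj
          show y ^ q = (algebraMap L Lr l) ^ q
          rw [hy, map_pow]
        rw [this]
        have h1 : algebraMap L Lr l = l • algebraMap Kr Lr 1 := by
          rw [map_one, Algebra.smul_def, mul_one]
        rw [h1]
        exact Submodule.smul_mem M l (Submodule.subset_span ⟨1, rfl⟩)
      | zero =>
        intro y hy
        have : y = 0 := by
          apply frobLrInj
          show y ^ q = (0 : Lr) ^ q
          rw [hy, map_zero, zero_pow (pow_ne_zero e (Fact.out : p.Prime).ne_zero)]
        rw [this]; exact Submodule.zero_mem M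
      | add c₁ c₂ _ _ h₁ h₂ =>
        intro y hy
        obtain ⟨y₁, hy₁⟩ := hLr' c₁
        obtain ⟨y₂, hy₂⟩ := hLr' c₂
        have : y = y₁ + y₂ := by
          apply frobLrInj
          show y ^ q = (y₁ + y₂) ^ q
          rw [hy, add_pow_char_pow, hy₁, hy₂, map_add]
        rw [this]
        exact Submodule.add_mem M (h₁ y₁ hy₁) (h₂ y₂ hy₂)
      | smul k c' _ hc' =>
        intro y hy
        obtain ⟨κ, hκ⟩ := hKr' k
        obtain ⟨yc, hyc⟩ := hLr' c'
        have : y = algebraMap Kr Lr κ * yc := by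
          apply frobLrInj
          show y ^ q = (algebraMap Kr Lr κ * yc) ^ q
          rw [hy, mul_pow, ← map_pow, hκ, hyc, ← IsScalarTower.algebraMap_apply,
            IsScalarTower.algebraMap_apply K L Lr, ← map_mul, ← Algebra.smul_def]
        rw [this]
        exact mulmem κ yc (hc' yc hyc)
    exact this c y hc.symm
  exact eq_top_iff.mpr (fun y _ => main y)




/-- Let `K ⊆ L` be a finite separable extension of `F`-finite fields of
characteristic `p > 0`.  With `Kr = K^{1/p^e}` and `Lr = L^{1/p^e}` the fields of `p^e`-th
roots, every `K`-linear map `φ : K^{1/p^e} → K` extends uniquely to an `L`-linear map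
`φ̄ : L^{1/p^e} → L`. -/
theorem unique_extension_of_p_inverse_linear_map
    (p : ℕ) [Fact p.Prime] (e : ℕ)
    (K L Kr Lr : Type) [Field K] [Field L] [Field Kr] [Field Lr]
    [Algebra K L] [Algebra K Kr] [Algebra L Lr] [Algebra Kr Lr] [Algebra K Lr]
    [IsScalarTower K L Lr] [IsScalarTower K Kr Lr]
    [CharP K p]
    [FiniteDimensional K L] [Algebra.IsSeparable K L]
    [FiniteDimensional K Kr] [FiniteDimensional L Lr]
    (hKr : ∀ x : Kr, x ^ p ^ e ∈ (algebraMap K Kr).range)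
    (hKr' : ∀ a : K, ∃ x : Kr, x ^ p ^ e = algebraMap K Kr a)
    (hLr : ∀ x : Lr, x ^ p ^ e ∈ (algebraMap L Lr).range)
    (hLr' : ∀ a : L, ∃ x : Lr, x ^ p ^ e = algebraMap L Lr a)
    (φ : Kr →ₗ[K] K) :
    ∃! φbar : Lr →ₗ[L] L,
      ∀ x : Kr, φbar (algebraMap Kr Lr x) = algebraMap K L (φ x) := by
  haveI : CharP L p := charP_of_injective_algebraMap (algebraMap K L).injective p
  -- dimension count
  have hrankKr := aux_rank_root p e K Kr hKr hKr'
  have hrankLr := aux_rank_root p e L Lr hLr hLr'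
  have hfinK : Module.rank (iterateFrobenius K p e).fieldRange K < Cardinal.aleph0 :=
    hrankKr ▸ Module.rank_lt_aleph0 K Kr
  have hfinL : Module.rank (iterateFrobenius L p e).fieldRange L < Cardinal.aleph0 :=
    hrankLr ▸ Module.rank_lt_aleph0 L Lr
  have hrank : Module.rank L Lr = Module.rank K Kr := by
    rw [hrankLr, hrankKr, aux_rank_main p e K L hfinK hfinL]
  have hfinrank : Module.finrank L Lr = Module.finrank K Kr := by
    simp [Module.finrank, hrank]
  -- spanning
  have hspan := aux_span p e K L Kr Lr hKr' hLr' hLr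
  -- basis
  set ι := Fin (Module.finrank K Kr) with hι
  set b : Basis ι K Kr := Module.finBasis K Kr with hb
  set f : ι → Lr := fun i => algebraMap Kr Lr (b i) with hf
  set T : Kr →ₗ[K] Lr := (IsScalarTower.toAlgHom K Kr Lr).toLinearMap with hT
  have hTapp : ∀ x : Kr, T x = algebraMap Kr Lr x := fun x => rfl
  have hexpand : ∀ x : Kr, algebraMap Kr Lr x = ∑ i, b.repr x i • f i := by
    intro x
    conv_lhs => rw [← b.sum_repr x, ← hTapp, map_sum]
    refine Finset.sum_congr rfl fun i _ => ?_
    rw [map_smul, hTapp]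
  have hfspan : ⊤ ≤ Submodule.span L (Set.range f) := by
    rw [← hspan, Submodule.span_le]
    rintro - ⟨x, rfl⟩
    rw [hexpand x]
    refine Submodule.sum_mem _ fun i _ => ?_
    rw [← algebraMap_smul L (b.repr x i) (f i)]
    exact Submodule.smul_mem _ _ (Submodule.subset_span ⟨i, rfl⟩)
  have hcard : Fintype.card ι = Module.finrank L Lr := by
    rw [hfinrank]; exact Fintype.card_fin _
  set B : Basis ι L Lr := basisOfTopLeSpanOfCardEqFinrank f hfspan hcard with hB
  have hBapp : ∀ i, B i = f i := fun i =>
    congrFun (coe_basisOfTopLeSpanOfCardEqFinrank f hfspan hcard) i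
  set g : ι → L := fun i => algebraMap K L (φ (b i)) with hg
  set φb : Lr →ₗ[L] L := B.constr ℕ g with hφb
  have hprop : ∀ x : Kr, φb (algebraMap Kr Lr x) = algebraMap K L (φ x) := by
    intro x
    rw [hexpand x, map_sum]
    have hterm : ∀ i, φb (b.repr x i • f i) = algebraMap K L (b.repr x i * φ (b i)) := by
      intro i
      rw [← algebraMap_smul L (b.repr x i) (f i), map_smul, ← hBapp, hφb,
        Basis.constr_basis, smul_eq_mul, ← map_mul]
    rw [Finset.sum_congr rfl fun i _ => hterm i, ← map_sum]
    congr 1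
    conv_rhs => rw [← b.sum_repr x, map_sum]
    refine Finset.sum_congr rfl fun i _ => ?_
    rw [map_smul, smul_eq_mul]
  refine ⟨φb, hprop, fun ψ hψ => ?_⟩
  apply LinearMap.ext_on hspan
  rintro - ⟨x, rfl⟩
  rw [hψ x, hprop x]
end

section
/- Let K ⊆ L be a finite separable extension of F-finite fields of characteristic p > 0, let φ : K^{1/p^e} → K be K-linear, and let φ̄ : L^{1/p^e} → L be its unique L-linear extension. Then the diagram commutes: Tr_{L/K} ∘ φ̄ = φ ∘ Tr_{L^{1/p^e}/K^{1/p^e}} as maps L^{1/p^e} → K. -/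
/-- Let `K ⊆ L` be a finite separable extension of `F`-finite fields of
characteristic `p > 0`, with `Kr = K^{1/p^e} ⊆ Lr = L^{1/p^e}` the fields of `p^e`-th roots.
If `φ : K^{1/p^e} → K` is `K`-linear with (unique) `L`-linear extension
`φ̄ : L^{1/p^e} → L`, then `Tr_{L/K} ∘ φ̄ = φ ∘ Tr_{L^{1/p^e}/K^{1/p^e}}`. -/
theorem trace_commutes_with_extension
    (p : ℕ) [Fact p.Prime] (e : ℕ)
    (K L Kr Lr : Type) [Field K] [Field L] [Field Kr] [Field Lr]
    [Algebra K L] [Algebra K Kr] [Algebra L Lr] [Algebra Kr Lr] [Algebra K Lr]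
    [IsScalarTower K L Lr] [IsScalarTower K Kr Lr]
    [CharP K p]
    [FiniteDimensional K L] [Algebra.IsSeparable K L]
    [FiniteDimensional K Kr] [FiniteDimensional L Lr]
    (hKr : ∀ x : Kr, x ^ p ^ e ∈ (algebraMap K Kr).range)
    (hKr' : ∀ a : K, ∃ x : Kr, x ^ p ^ e = algebraMap K Kr a)
    (hLr : ∀ x : Lr, x ^ p ^ e ∈ (algebraMap L Lr).range)
    (hLr' : ∀ a : L, ∃ x : Lr, x ^ p ^ e = algebraMap L Lr a)
    (φ : Kr →ₗ[K] K) (φbar : Lr →ₗ[L] L)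
    (hext : ∀ x : Kr, φbar (algebraMap Kr Lr x) = algebraMap K L (φ x)) :
    ∀ X : Lr, Algebra.trace K L (φbar X) = φ (Algebra.trace Kr Lr X) := by
  have hp : p.Prime := Fact.out
  haveI : CharP L p := charP_of_injective_algebraMap (algebraMap K L).injective p
  haveI : CharP Kr p := charP_of_injective_algebraMap (algebraMap K Kr).injective p
  haveI : CharP Lr p := charP_of_injective_algebraMap (algebraMap K Lr).injective p
  haveI : ExpChar K p := .prime hp
  haveI : ExpChar L p := .prime hp
  haveI : ExpChar Kr p := .prime hp
  haveI : ExpChar Lr p := .prime hp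
  have injL : Function.Injective (algebraMap L Lr) := (algebraMap L Lr).injective
  have injK : Function.Injective (algebraMap K Kr) := (algebraMap K Kr).injective
  choose fL hfL using fun x => RingHom.mem_range.mp (hLr x)
  choose fK hfK using fun x => RingHom.mem_range.mp (hKr x)
  have powinjLr : ∀ X Y : Lr, X ^ p ^ e = Y ^ p ^ e → X = Y := by
    intro X Y h
    have h0 : (X - Y) ^ p ^ e = 0 := by rw [sub_pow_char_pow, h, sub_self]
    have := pow_eq_zero_iff (pow_ne_zero e hp.ne_zero) |>.mp h0
    exact sub_eq_zero.mp this
  have powinjKr : ∀ X Y : Kr, X ^ p ^ e = Y ^ p ^ e → X = Y := by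
    intro X Y h
    have h0 : (X - Y) ^ p ^ e = 0 := by rw [sub_pow_char_pow, h, sub_self]
    have := pow_eq_zero_iff (pow_ne_zero e hp.ne_zero) |>.mp h0
    exact sub_eq_zero.mp this
  -- ring hom structures
  let homL : Lr →+* L :=
  { toFun := fL
    map_one' := injL (by rw [hfL, one_pow, map_one])
    map_mul' := fun X Y => injL (by rw [hfL, map_mul, hfL, hfL, mul_pow])
    map_zero' := injL (by rw [hfL, map_zero, zero_pow (pow_ne_zero e hp.ne_zero)])
    map_add' := fun X Y => injL (by rw [hfL, map_add, hfL, hfL, add_pow_char_pow]) }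
  have homL_bij : Function.Bijective homL := by
    constructor
    · intro X Y h
      refine powinjLr X Y ?_
      rw [← hfL, ← hfL]
      exact congrArg _ h
    · intro a
      obtain ⟨x, hx⟩ := hLr' a
      exact ⟨x, injL (by rw [show homL x = fL x from rfl, hfL, hx])⟩
  let homK : Kr →+* K :=
  { toFun := fK
    map_one' := injK (by rw [hfK, one_pow, map_one])
    map_mul' := fun X Y => injK (by rw [hfK, map_mul, hfK, hfK, mul_pow])
    map_zero' := injK (by rw [hfK, map_zero, zero_pow (pow_ne_zero e hp.ne_zero)])
    map_add' := fun X Y => injK (by rw [hfK, map_add, hfK, hfK, add_pow_char_pow]) }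
  have homK_bij : Function.Bijective homK := by
    constructor
    · intro X Y h
      refine powinjKr X Y ?_
      rw [← hfK, ← hfK]
      exact congrArg _ h
    · intro a
      obtain ⟨x, hx⟩ := hKr' a
      exact ⟨x, injK (by rw [show homK x = fK x from rfl, hfK, hx])⟩
  let eL : Lr ≃+* L := RingEquiv.ofBijective homL homL_bij
  let eK : Kr ≃+* K := RingEquiv.ofBijective homK homK_bij
  have heL : ∀ X : Lr, algebraMap L Lr (eL X) = X ^ p ^ e := hfL
  have heK : ∀ X : Kr, algebraMap K Kr (eK X) = X ^ p ^ e := hfK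
  have hcompat : ∀ k : Kr, eL (algebraMap Kr Lr k) = algebraMap K L (eK k) := by
    intro k
    apply injL
    rw [heL, ← map_pow, ← heK, ← IsScalarTower.algebraMap_apply, ← IsScalarTower.algebraMap_apply]
  have he : (algebraMap K L).comp (eK : Kr →+* K) = (eL : Lr →+* L).comp (algebraMap Kr Lr) :=
    RingHom.ext fun k => (hcompat k).symm
  haveI sepLrKr : Algebra.IsSeparable Kr Lr := by
    refine Algebra.IsSeparable.of_equiv_equiv eK.symm eL.symm ?_
    refine RingHom.ext fun a => ?_
    apply eL.injective
    show eL (algebraMap Kr Lr (eK.symm a)) = eL (eL.symm (algebraMap K L a))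
    rw [hcompat, RingEquiv.apply_symm_apply, RingEquiv.apply_symm_apply]
  -- trace commutes with p^e-th power
  have tracepow : ∀ x : L, Algebra.trace K L (x ^ p ^ e) = (Algebra.trace K L x) ^ p ^ e := by
    intro x
    haveI : ExpChar (AlgebraicClosure K) p :=
      expChar_of_injective_algebraMap (algebraMap K (AlgebraicClosure K)).injective p
    have h1 := trace_eq_sum_embeddings (K := K) (L := L) (AlgebraicClosure K) (x := x ^ p ^ e)
    have h2 := trace_eq_sum_embeddings (K := K) (L := L) (AlgebraicClosure K) (x := x)
    apply (algebraMap K (AlgebraicClosure K)).injective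
    rw [h1, map_pow (algebraMap K (AlgebraicClosure K)), h2]
    calc ∑ σ : L →ₐ[K] AlgebraicClosure K, σ (x ^ p ^ e)
        = ∑ σ : L →ₐ[K] AlgebraicClosure K, iterateFrobenius (AlgebraicClosure K) p e (σ x) := by
          simp [iterateFrobenius_def]
      _ = iterateFrobenius (AlgebraicClosure K) p e (∑ σ : L →ₐ[K] AlgebraicClosure K, σ x) :=
          (map_sum _ _ _).symm
      _ = (∑ σ : L →ₐ[K] AlgebraicClosure K, σ x) ^ p ^ e := iterateFrobenius_def ..
  -- the key base-change lemma for traces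
  have key : ∀ l : L, Algebra.trace Kr Lr (algebraMap L Lr l)
      = algebraMap K Kr (Algebra.trace K L l) := by
    intro l
    have h1 : eL (algebraMap L Lr l) = l ^ p ^ e := by
      apply injL
      rw [heL, map_pow]
    have h2 := Algebra.trace_eq_of_equiv_equiv eK eL he (algebraMap L Lr l)
    rw [h1, tracepow] at h2
    rw [h2]
    apply eK.injective
    rw [RingEquiv.apply_symm_apply]
    apply injK
    rw [heK, map_pow]
  -- the product case
  have prod_case : ∀ (k : Kr) (l : L),
      Algebra.trace K L (φbar (k • algebraMap L Lr l))
        = φ (Algebra.trace Kr Lr (k • algebraMap L Lr l)) := by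
    intro k l
    have h1 : k • algebraMap L Lr l = l • algebraMap Kr Lr k := by
      rw [Algebra.smul_def, Algebra.smul_def, mul_comm]
    have hL : φbar (k • algebraMap L Lr l) = l • algebraMap K L (φ k) := by
      rw [h1, map_smul, hext]
    have hR : Algebra.trace Kr Lr (k • algebraMap L Lr l)
        = k * algebraMap K Kr (Algebra.trace K L l) := by
      rw [map_smul, key, smul_eq_mul]
    rw [hL, hR]
    have e1 : Algebra.trace K L (l • algebraMap K L (φ k)) = φ k * Algebra.trace K L l := by
      rw [smul_eq_mul, mul_comm, ← Algebra.smul_def, map_smul, smul_eq_mul]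
    have e2 : φ (k * algebraMap K Kr (Algebra.trace K L l)) = Algebra.trace K L l * φ k := by
      rw [mul_comm, ← Algebra.smul_def, map_smul, smul_eq_mul]
    rw [e1, e2, mul_comm]
  -- span of p^e-th powers is everything
  intro X
  have hsp : Submodule.span K (Set.range (fun x : L => x ^ p ^ e)) = ⊤ := by
    have h := Field.span_map_pow_expChar_pow_eq_top_of_isSeparable (F := K) (E := L) p e
      (v := id) (by rw [Set.range_id, Submodule.span_univ])
    simpa using h
  have main : ∀ y : L, y ∈ Submodule.span K (Set.range (fun x : L => x ^ p ^ e)) →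
      ∀ Z : Lr, Z ^ p ^ e = algebraMap L Lr y →
      Z ∈ Submodule.span Kr (Set.range (algebraMap L Lr)) := by
    intro y hy
    induction hy using Submodule.span_induction with
    | mem x hx =>
      intro Z hZ
      obtain ⟨x0, hx0⟩ := hx
      have hx0' : x0 ^ p ^ e = x := hx0
      have : Z = algebraMap L Lr x0 := by
        apply powinjLr
        rw [hZ, ← map_pow, hx0']
      rw [this]
      exact Submodule.subset_span ⟨x0, rfl⟩
    | zero =>
      intro Z hZ
      rw [map_zero] at hZ
      have : Z = 0 := by
        apply powinjLr
        rw [hZ, zero_pow (pow_ne_zero e hp.ne_zero)]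
      rw [this]; exact Submodule.zero_mem _
    | add x y hx hy ihx ihy =>
      intro Z hZ
      obtain ⟨Zx, hZx⟩ := hLr' x
      obtain ⟨Zy, hZy⟩ := hLr' y
      have : Z = Zx + Zy := by
        apply powinjLr
        rw [hZ, add_pow_char_pow, hZx, hZy, map_add]
      rw [this]
      exact Submodule.add_mem _ (ihx Zx hZx) (ihy Zy hZy)
    | smul a x hx ihx =>
      intro Z hZ
      obtain ⟨r, hr⟩ := hKr' a
      obtain ⟨Zx, hZx⟩ := hLr' x
      have : Z = r • Zx := by
        apply powinjLr
        rw [hZ, Algebra.smul_def, map_mul, Algebra.smul_def, mul_pow, ← map_pow, hr, hZx,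
          ← IsScalarTower.algebraMap_apply K Kr Lr, ← IsScalarTower.algebraMap_apply K L Lr]
      rw [this]
      exact Submodule.smul_mem _ _ (ihx Zx hZx)
  have hXmem : X ∈ Submodule.span Kr (Set.range (algebraMap L Lr)) :=
    main (fL X) (hsp ▸ Submodule.mem_top) X (hfL X).symm
  obtain ⟨n, c, g, hg⟩ := Submodule.mem_span_set'.mp hXmem
  choose li hli using fun i => (g i).2
  have hg' : ∑ i, c i • algebraMap L Lr (li i) = X := by
    rw [← hg]
    exact Finset.sum_congr rfl fun i _ => by rw [hli]
  calc Algebra.trace K L (φbar X)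
      = ∑ i, Algebra.trace K L (φbar (c i • algebraMap L Lr (li i))) := by
        rw [← hg', map_sum, map_sum]
    _ = ∑ i, φ (Algebra.trace Kr Lr (c i • algebraMap L Lr (li i))) :=
        Finset.sum_congr rfl fun i _ => prod_case (c i) (li i)
    _ = φ (Algebra.trace Kr Lr X) := by rw [← map_sum, ← map_sum, hg']
end

section
/- Let K ⊆ L be a finite extension of fields of characteristic p > 0 with L containing an element that is purely inseparable of degree p over K (i.e., there exists x ∈ K with x^{1/p} ∈ L \ K). Then the only K-linear map φ : K^{1/p^e} → K that extends to an L-linear map φ̄ : L^{1/p^e} → L is the zero map. -/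
/-- Let `K ⊆ L` be a finite extension of fields of characteristic `p > 0`
such that `L` contains an element which is purely inseparable of degree `p` over `K`
(i.e. there is `y ∈ L \ K` with `y^p ∈ K`).  With `Kr = K^{1/p^e} ⊆ Lr = L^{1/p^e}`
(`e ≥ 1`) the fields of `p^e`-th roots, the only `K`-linear map `φ : K^{1/p^e} → K`
extending to an `L`-linear map `φ̄ : L^{1/p^e} → L` is the zero map. -/
theorem only_zero_extends_purely_inseparable
    (p : ℕ) [Fact p.Prime] (e : ℕ) (he : 1 ≤ e)
    (K L Kr Lr : Type) [Field K] [Field L] [Field Kr] [Field Lr]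
    [Algebra K L] [Algebra K Kr] [Algebra L Lr] [Algebra Kr Lr] [Algebra K Lr]
    [IsScalarTower K L Lr] [IsScalarTower K Kr Lr]
    [CharP K p]
    [FiniteDimensional K L]
    (hins : ∃ y : L, y ∉ (algebraMap K L).range ∧ y ^ p ∈ (algebraMap K L).range)
    (hKr : ∀ x : Kr, x ^ p ^ e ∈ (algebraMap K Kr).range)
    (hKr' : ∀ a : K, ∃ x : Kr, x ^ p ^ e = algebraMap K Kr a)
    (hLr : ∀ x : Lr, x ^ p ^ e ∈ (algebraMap L Lr).range)
    (hLr' : ∀ a : L, ∃ x : Lr, x ^ p ^ e = algebraMap L Lr a)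
    (φ : Kr →ₗ[K] K)
    (hext : ∃ φbar : Lr →ₗ[L] L,
      ∀ x : Kr, φbar (algebraMap Kr Lr x) = algebraMap K L (φ x)) :
    φ = 0 := by
  obtain ⟨y, hy, c, hc⟩ := hins
  obtain ⟨φbar, hφbar⟩ := hext
  have hcharLr : CharP Lr p := charP_of_injective_algebraMap (algebraMap K Lr).injective p
  have hpe : p ^ e = p * p ^ (e - 1) := by
    rw [← pow_succ']
    congr 1
    omega
  ext r
  simp only [LinearMap.zero_apply]
  by_contra hr
  obtain ⟨z, hz⟩ := hKr r
  obtain ⟨s, hs⟩ := hKr' (c ^ p ^ (e - 1) * z)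
  set w : Lr := algebraMap L Lr y * algebraMap Kr Lr r with hw
  have hwpow : w ^ p ^ e = algebraMap K Lr (c ^ p ^ (e - 1) * z) := by
    rw [hw, mul_pow, ← map_pow, ← map_pow, ← hz, hpe, pow_mul, ← hc, ← map_pow,
      ← IsScalarTower.algebraMap_apply K L Lr, ← IsScalarTower.algebraMap_apply K Kr Lr,
      ← map_mul]
  have hws : w = algebraMap Kr Lr s := by
    have h0 : (w - algebraMap Kr Lr s) ^ p ^ e = 0 := by
      rw [sub_pow_char_pow, hwpow, ← map_pow, hs,
        ← IsScalarTower.algebraMap_apply K Kr Lr, sub_self]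
    have := pow_eq_zero_iff (n := p ^ e) (pow_ne_zero e (Fact.out : p.Prime).ne_zero) |>.mp h0
    exact sub_eq_zero.mp this
  have h1 : φbar w = algebraMap K L (φ s) := by rw [hws, hφbar]
  have h2 : φbar w = y * algebraMap K L (φ r) := by
    have : w = y • algebraMap Kr Lr r := by rw [Algebra.smul_def, hw]
    rw [this, map_smul, hφbar, smul_eq_mul]
  apply hy
  have hφru : algebraMap K L (φ r) ≠ 0 := by
    simpa using (map_ne_zero (algebraMap K L)).mpr hr
  refine ⟨φ s * (φ r)⁻¹, ?_⟩
  rw [map_mul, map_inv₀]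
  field_simp
  rw [← h1, h2, mul_comm]
end

section
/- Let K ⊆ L be a finite inseparable extension of F-finite fields of characteristic p > 0. Then the only K-linear map φ : K^{1/p^e} → K that extends to an L-linear map φ̄ : L^{1/p^e} → L is the zero map. -/
/-- Let `K ⊆ L` be a finite inseparable extension of `F`-finite fields of
characteristic `p > 0`, and let `Kr = K^{1/p^e} ⊆ Lr = L^{1/p^e}` (`e ≥ 1`) be the fields of
`p^e`-th roots.  Then the only `K`-linear map `φ : K^{1/p^e} → K` that extends to an
`L`-linear map `φ̄ : L^{1/p^e} → L` is the zero map. -/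
theorem only_zero_extends_inseparable
    (p : ℕ) [Fact p.Prime] (e : ℕ) (he : 1 ≤ e)
    (K L Kr Lr : Type) [Field K] [Field L] [Field Kr] [Field Lr]
    [Algebra K L] [Algebra K Kr] [Algebra L Lr] [Algebra Kr Lr] [Algebra K Lr]
    [IsScalarTower K L Lr] [IsScalarTower K Kr Lr]
    [CharP K p]
    [FiniteDimensional K L]
    (hnotsep : ¬ Algebra.IsSeparable K L)
    [FiniteDimensional K Kr] [FiniteDimensional L Lr]
    (hKr : ∀ x : Kr, x ^ p ^ e ∈ (algebraMap K Kr).range)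
    (hKr' : ∀ a : K, ∃ x : Kr, x ^ p ^ e = algebraMap K Kr a)
    (hLr : ∀ x : Lr, x ^ p ^ e ∈ (algebraMap L Lr).range)
    (hLr' : ∀ a : L, ∃ x : Lr, x ^ p ^ e = algebraMap L Lr a)
    (φ : Kr →ₗ[K] K)
    (hext : ∃ φbar : Lr →ₗ[L] L,
      ∀ x : Kr, φbar (algebraMap Kr Lr x) = algebraMap K L (φ x)) :
    φ = 0 := by
  classical
  by_contra hφ
  -- get `y` with `φ y ≠ 0`
  obtain ⟨y, hy⟩ : ∃ y : Kr, φ y ≠ 0 := by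
    by_contra h
    push_neg at h
    exact hφ (LinearMap.ext fun z => h z)
  obtain ⟨φbar, hφbar⟩ := hext
  -- characteristic of all the fields involved
  haveI : CharP L p := charP_of_injective_algebraMap (algebraMap K L).injective p
  haveI : CharP Lr p := charP_of_injective_algebraMap (algebraMap L Lr).injective p
  -- the separable closure
  set K' : IntermediateField K L := separableClosure K L with hK'
  haveI : CharP ↥K' p := charP_of_injective_algebraMap (algebraMap K ↥K').injective p
  have hne : K' ≠ ⊤ := fun h => hnotsep ((separableClosure.eq_top_iff K L).1 h)
  obtain ⟨x₀, -, hx₀⟩ := SetLike.exists_of_lt (lt_top_iff_ne_top.2 hne)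
  -- find `b ∉ K'` with `b ^ p ∈ K'`
  have hexn : ∃ n : ℕ, x₀ ^ p ^ n ∈ K' := by
    obtain ⟨n, z, hz⟩ := IsPurelyInseparable.pow_mem (↥K') p x₀
    exact ⟨n, hz ▸ z.2⟩
  set n := Nat.find hexn with hn
  have hn0 : n ≠ 0 := by
    intro h
    have := Nat.find_spec hexn
    rw [← hn, h] at this
    simp only [pow_zero, pow_one] at this
    exact hx₀ this
  set b : L := x₀ ^ p ^ (n - 1) with hbdef
  have hb : b ∉ K' := Nat.find_min hexn (Nat.sub_lt (Nat.pos_of_ne_zero hn0) one_pos)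
  have hc : b ^ p ∈ K' := by
    have : b ^ p = x₀ ^ p ^ n := by
      rw [hbdef, ← pow_mul, ← pow_succ, Nat.sub_add_cancel (Nat.one_le_iff_ne_zero.2 hn0)]
    rw [this]
    exact Nat.find_spec hexn
  set c : L := b ^ p with hcdef
  -- `c` is separable over `K`, hence lies in `Algebra.adjoin K {c ^ p ^ e}`
  have hsep : IsSeparable K c := mem_separableClosure_iff.1 hc
  haveI : Algebra.IsSeparable K ↥(IntermediateField.adjoin K ({c} : Set L)) :=
    (IntermediateField.isSeparable_adjoin_simple_iff_isSeparable K L).2 hsep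
  have hadj : c ∈ IntermediateField.adjoin K ({c ^ p ^ e} : Set L) := by
    have := IntermediateField.adjoin_eq_adjoin_pow_expChar_pow_of_isSeparable K L
      ({c} : Set L) p e
    rw [Set.image_singleton] at this
    exact this ▸ IntermediateField.subset_adjoin K _ rfl
  have hint : IsIntegral K (c ^ p ^ e) :=
    (Algebra.IsIntegral.isIntegral (R := K) (c ^ p ^ e))
  have hadj' : c ∈ Algebra.adjoin K ({c ^ p ^ e} : Set L) := by
    have h1 := IntermediateField.adjoin_simple_toSubalgebra_of_isAlgebraic hint.isAlgebraic
    have : c ∈ (IntermediateField.adjoin K ({c ^ p ^ e} : Set L)).toSubalgebra := hadj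
    rwa [h1] at this
  rw [Algebra.adjoin_singleton_eq_range_aeval] at hadj'
  obtain ⟨f, hf⟩ := hadj'
  -- write `c = ∑ aᵢ (cⁱ)^(p^e)`
  set N : ℕ := f.natDegree + 1 with hN
  have hf' : Polynomial.aeval (c ^ p ^ e) f = c := hf
  have hcsum : ∑ i ∈ Finset.range N, algebraMap K L (f.coeff i) * (c ^ i) ^ p ^ e = c := by
    have h2 := Polynomial.aeval_eq_sum_range (R := K) (S := L) (p := f) (c ^ p ^ e)
    rw [hf'] at h2
    refine Eq.trans (Finset.sum_congr rfl fun i _ => ?_) h2.symm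
    rw [Algebra.smul_def, ← pow_mul, ← pow_mul, mul_comm i (p ^ e)]
    congr 1
    rw [hcdef, hbdef]
    simp only [← pow_mul]
    congr 1
    ring
  -- choose `p^e`-th roots of the coefficients in `Kr`
  set u : ℕ → Kr := fun i => (hKr' (f.coeff i)).choose with hu
  have hupow : ∀ i, (u i) ^ p ^ e = algebraMap K Kr (f.coeff i) :=
    fun i => (hKr' (f.coeff i)).choose_spec
  -- the element `w` with `w ^ (p^(e-1)) = b`
  set w : Lr := ∑ i ∈ Finset.range N,
    algebraMap L Lr (c ^ i) * algebraMap Kr Lr (u i) with hw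
  have hwpe : w ^ p ^ e = algebraMap L Lr c := by
    rw [hw, sum_pow_char_pow]
    have hterm : ∀ i ∈ Finset.range N,
        ((algebraMap L Lr) (c ^ i) * (algebraMap Kr Lr) (u i)) ^ p ^ e
          = algebraMap L Lr (algebraMap K L (f.coeff i) * (c ^ i) ^ p ^ e) := by
      intro i _
      rw [mul_pow, ← map_pow, ← map_pow, hupow i, ← IsScalarTower.algebraMap_apply K Kr Lr,
        IsScalarTower.algebraMap_apply K L Lr, map_mul, map_pow]
      ring
    rw [Finset.sum_congr rfl hterm, ← map_sum, hcsum]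
  have hwb : w ^ p ^ (e - 1) = algebraMap L Lr b := by
    apply frobenius_inj Lr p
    rw [frobenius_def, frobenius_def, ← pow_mul, ← pow_succ,
      Nat.sub_add_cancel he, hwpe, ← map_pow, ← hcdef]
  -- evaluate `φbar` on `(algebraMap L Lr b) * (algebraMap Kr Lr y)` in two ways
  have hway1 : φbar (algebraMap L Lr b * algebraMap Kr Lr y)
      = b * algebraMap K L (φ y) := by
    rw [← Algebra.smul_def, map_smul, hφbar, smul_eq_mul]
  have hway2 : φbar (algebraMap L Lr b * algebraMap Kr Lr y)
      = ∑ i ∈ Finset.range N,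
        (c ^ i) ^ p ^ (e - 1) * algebraMap K L (φ ((u i) ^ p ^ (e - 1) * y)) := by
    rw [← hwb, hw, sum_pow_char_pow, Finset.sum_mul, map_sum]
    refine Finset.sum_congr rfl fun i _ => ?_
    rw [mul_pow, ← map_pow, ← map_pow, mul_assoc, ← map_mul, ← Algebra.smul_def, map_smul,
      hφbar, smul_eq_mul]
  -- hence `b * algebraMap K L (φ y) ∈ K'`
  have hmem : b * algebraMap K L (φ y) ∈ K' := by
    rw [← hway1, hway2]
    refine Subfield.sum_mem K'.toSubfield fun i _ => ?_
    exact mul_mem (pow_mem (pow_mem hc i) _) (K'.algebraMap_mem _)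
  have hne0 : algebraMap K L (φ y) ≠ 0 := fun h =>
    hy ((algebraMap K L).injective (by rw [h, map_zero]))
  have : b ∈ K' := by
    have hb2 : b = b * algebraMap K L (φ y) * (algebraMap K L (φ y))⁻¹ := by
      field_simp
    rw [hb2]
    exact mul_mem hmem (inv_mem (K'.algebraMap_mem (φ y)))
  exact hb this
end

section
/- Let K ⊆ L be a finite extension of fields of characteristic p > 0, let T : L → K be a non-zero K-linear map, and let φ : K^{1/p^e} → K be a K-linear map. Then there exists a unique L-linear map φ_T : L^{1/p^e} → L satisfying T ∘ φ_T = φ ∘ T^{1/p^e}, where T^{1/p^e} : L^{1/p^e} → K^{1/p^e} is the p^e-th root of T (the T-transpose of φ). -/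
/-- Let `K ⊆ L` be a finite extension of (`F`-finite) fields of
characteristic `p > 0`, `T : L → K` a non-zero `K`-linear map, and `φ : K^{1/p^e} → K` a
`K`-linear map.  Here `Kr = K^{1/p^e} ⊆ Lr = L^{1/p^e}` are the fields of `p^e`-th roots and
`Troot : Lr → Kr` is the `p^e`-th root of `T`, characterized by
`Troot(x^{1/p^e}) = (T x)^{1/p^e}`.  Then there is a unique `L`-linear map
`φ_T : L^{1/p^e} → L` (the `T`-transpose of `φ`) with `T ∘ φ_T = φ ∘ T^{1/p^e}`. -/
theorem exists_unique_transpose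
    (p : ℕ) [Fact p.Prime] (e : ℕ)
    (K L Kr Lr : Type) [Field K] [Field L] [Field Kr] [Field Lr]
    [Algebra K L] [Algebra K Kr] [Algebra L Lr] [Algebra Kr Lr] [Algebra K Lr]
    [IsScalarTower K L Lr] [IsScalarTower K Kr Lr]
    [CharP K p]
    [FiniteDimensional K L]
    [FiniteDimensional K Kr] [FiniteDimensional L Lr]
    (hKr : ∀ x : Kr, x ^ p ^ e ∈ (algebraMap K Kr).range)
    (hKr' : ∀ a : K, ∃ x : Kr, x ^ p ^ e = algebraMap K Kr a)
    (hLr : ∀ x : Lr, x ^ p ^ e ∈ (algebraMap L Lr).range)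
    (hLr' : ∀ a : L, ∃ x : Lr, x ^ p ^ e = algebraMap L Lr a)
    (T : L →ₗ[K] K) (hT : T ≠ 0)
    (Troot : Lr →ₗ[Kr] Kr)
    (hTroot : ∀ (x : L) (X : Lr),
      X ^ p ^ e = algebraMap L Lr x → (Troot X) ^ p ^ e = algebraMap K Kr (T x))
    (φ : Kr →ₗ[K] K) :
    ∃! φT : Lr →ₗ[L] L, ∀ X : Lr, T (φT X) = φ (Troot X) := by
  classical
  haveI : FiniteDimensional K Lr := Module.Finite.trans L Lr
  -- a nonzero L-linear functional ψ0 : Lr → L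
  obtain ⟨a0, ha0⟩ : ∃ a : L, T a ≠ 0 := by
    by_contra h
    push_neg at h
    exact hT (LinearMap.ext fun x => h x)
  have hfr : 0 < Module.finrank L Lr := Module.finrank_pos
  set b := Module.finBasis L Lr with hb
  set ψ0 : Lr →ₗ[L] L := b.coord ⟨0, hfr⟩ with hψ0
  -- g := T ∘ ψ0, K-linear and nonzero
  set g : Lr →ₗ[K] K := T.comp (ψ0.restrictScalars K) with hg
  -- ψ0 is surjective
  have hψ0surj : Function.Surjective ψ0 := by
    intro a
    refine ⟨a • b ⟨0, hfr⟩, ?_⟩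
    simp [hψ0, Module.Basis.coord_apply]
  have hgne : g ≠ 0 := by
    intro h0
    obtain ⟨x, hx⟩ := hψ0surj a0
    have : g x = 0 := by rw [h0]; rfl
    rw [hg] at this
    simp only [LinearMap.comp_apply, LinearMap.restrictScalars_apply, hx] at this
    exact ha0 this
  -- bilinear form B z x = g (z * x)
  set B : Lr →ₗ[K] (Lr →ₗ[K] K) := LinearMap.mk₂ K (fun z x => g (z * x))
    (fun z z' x => by show g ((z + z') * x) = g (z * x) + g (z' * x); rw [add_mul, map_add])
    (fun c z x => by
      show g (c • z * x) = c • g (z * x)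
      rw [Algebra.smul_def, mul_assoc, ← Algebra.smul_def, map_smul])
    (fun z x x' => by show g (z * (x + x')) = g (z * x) + g (z * x'); rw [mul_add, map_add])
    (fun c z x => by
      show g (z * (c • x)) = c • g (z * x)
      rw [Algebra.smul_def, mul_left_comm, ← Algebra.smul_def, map_smul])
    with hB
  have hBinj : Function.Injective B := by
    rw [injective_iff_map_eq_zero]
    intro z hz
    by_contra hzne
    apply hgne
    ext y
    have := congrArg (fun f : Lr →ₗ[K] K => f (z⁻¹ * y)) hz
    simp only [hB, LinearMap.mk₂_apply, LinearMap.zero_apply] at this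
    rwa [← mul_assoc, mul_inv_cancel₀ hzne, one_mul] at this
  have hBsurj : Function.Surjective B := by
    have heq : Module.finrank K Lr = Module.finrank K (Lr →ₗ[K] K) :=
      (Subspace.dual_finrank_eq (K := K) (V := Lr)).symm
    exact (LinearMap.injective_iff_surjective_of_finrank_eq_finrank heq).mp hBinj
  -- h := φ ∘ Troot
  set h : Lr →ₗ[K] K := φ.comp (Troot.restrictScalars K) with hh
  obtain ⟨z, hz⟩ := hBsurj h
  -- φT := ψ0 (z * ·)
  refine ⟨ψ0.comp (LinearMap.mulLeft L z), ?_, ?_⟩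
  · intro X
    have := congrArg (fun f : Lr →ₗ[K] K => f X) hz
    simp only [hB, LinearMap.mk₂_apply, hh, LinearMap.comp_apply,
      LinearMap.restrictScalars_apply, hg] at this ⊢
    simpa [LinearMap.mulLeft_apply] using this
  · intro f hf
    ext X
    by_contra hne
    set d : L := f X - ψ0 (z * X) with hd
    have hdne : d ≠ 0 := by
      simp only [hd, sub_ne_zero]
      simpa [LinearMap.mulLeft_apply] using hne
    have hTd : ∀ c : L, T (c * d) = 0 := by
      intro c
      have h1 : T (f (c • X)) = φ (Troot (c • X)) := hf _
      have h2 : T (ψ0.comp (LinearMap.mulLeft L z) (c • X)) = φ (Troot (c • X)) := by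
        have := congrArg (fun g' : Lr →ₗ[K] K => g' (c • X)) hz
        simp only [hB, LinearMap.mk₂_apply, hh, LinearMap.comp_apply,
          LinearMap.restrictScalars_apply, hg] at this
        simpa [LinearMap.mulLeft_apply, mul_left_comm] using this
      have : T (f (c • X) - ψ0 (z * (c • X))) = 0 := by
        rw [map_sub, h1]
        simp only [LinearMap.comp_apply, LinearMap.mulLeft_apply] at h2
        rw [h2, sub_self]
      have key : f (c • X) - ψ0 (z * (c • X)) = c * d := by
        rw [mul_smul_comm c z X, map_smul, map_smul, hd, mul_sub]
        simp [smul_eq_mul]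
      rw [← key]
      exact this
    apply ha0
    have := hTd (a0 * d⁻¹)
    rwa [mul_assoc, inv_mul_cancel₀ hdne, mul_one] at this
end

section
/- Let R ⊆ S be a module-finite inclusion of domains with fraction fields K ⊆ L. Suppose Φ ∈ Hom_K(L, K) satisfies Φ(S) ⊆ R and that Φ restricted to S generates Hom_R(S, R) as an S-module. If x ∈ L satisfies Φ(x·S) ⊆ R, then x ∈ S. -/
/-- Let `R ⊆ S` be a module-finite inclusion of domains with fraction
fields `K ⊆ L`.  Suppose `Φ ∈ Hom_K(L, K)` satisfies `Φ(S) ⊆ R` and `Φ|_S` generates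
`Hom_R(S, R)` as an `S`-module.  If `x ∈ L` satisfies `Φ(x·S) ⊆ R`, then `x ∈ S`. -/
theorem mem_of_generator_maps_into
    (R S K L : Type) [CommRing R] [CommRing S] [IsDomain R] [IsDomain S]
    [Field K] [Field L]
    [Algebra R S] (hRS : Function.Injective (algebraMap R S)) [Module.Finite R S]
    [Algebra R K] [IsFractionRing R K] [Algebra S L] [IsFractionRing S L]
    [Algebra K L] [Algebra R L] [IsScalarTower R K L] [IsScalarTower R S L]
    [FiniteDimensional K L]
    (Φ : L →ₗ[K] K)
    (hΦS : ∀ s : S, Φ (algebraMap S L s) ∈ (algebraMap R K).range)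
    (hgen : ∀ ψ : S →ₗ[R] R, ∃ s : S, ∀ a : S,
      algebraMap R K (ψ a) = Φ (algebraMap S L (s * a)))
    (x : L) (hx : ∀ s : S, Φ (x * algebraMap S L s) ∈ (algebraMap R K).range) :
    x ∈ (algebraMap S L).range := by
  classical
  have hinjRK : Function.Injective (algebraMap R K) := IsFractionRing.injective R K
  -- the image of `S` spans `L` over `K`
  have hmulmem : ∀ (a : S) (m : L), m ∈ Submodule.span K (Set.range (algebraMap S L)) →
      algebraMap S L a * m ∈ Submodule.span K (Set.range (algebraMap S L)) := by
    intro a m hm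
    induction hm using Submodule.span_induction with
    | mem y hy =>
      obtain ⟨s, rfl⟩ := hy
      exact Submodule.subset_span ⟨a * s, map_mul _ _ _⟩
    | zero => simpa using Submodule.zero_mem _
    | add y z hy hz ihy ihz =>
      rw [mul_add]; exact Submodule.add_mem _ ihy ihz
    | smul c y hy ihy =>
      rw [mul_smul_comm]; exact Submodule.smul_mem _ c ihy
  have hspan : Submodule.span K (Set.range (algebraMap S L)) = ⊤ := by
    rw [eq_top_iff]
    rintro l -
    obtain ⟨a, b, hb, rfl⟩ := IsFractionRing.div_surjective (A := S) l
    have hint : IsIntegral K (algebraMap S L b) := IsIntegral.of_finite K _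
    have hinv := hint.inv_mem_adjoin
    rw [Algebra.adjoin_singleton_eq_range_aeval] at hinv
    obtain ⟨p, hp⟩ := hinv
    have hp' : Polynomial.aeval (algebraMap S L b) p = (algebraMap S L b)⁻¹ := hp
    have hmem : (algebraMap S L b)⁻¹ ∈ Submodule.span K (Set.range (algebraMap S L)) := by
      rw [← hp', Polynomial.aeval_eq_sum_range]
      refine Submodule.sum_mem _ fun i _ => Submodule.smul_mem _ _ ?_
      exact Submodule.subset_span ⟨b ^ i, map_pow _ _ _⟩
    rw [div_eq_mul_inv]
    exact hmulmem a _ hmem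
  -- the submodule of "integers" in `K`
  set RK : Submodule R K := LinearMap.range (Algebra.linearMap R K) with hRKdef
  let e : R ≃ₗ[R] RK := LinearEquiv.ofInjective (Algebra.linearMap R K) hinjRK
  have hes : ∀ z : RK, algebraMap R K (e.symm z) = (z : K) := by
    intro z
    have : (e (e.symm z) : K) = (z : K) := by rw [e.apply_symm_apply]
    exact this
  have key : ∀ (M : S →ₗ[R] K), (∀ s, M s ∈ RK) →
      ∃ ψ : S →ₗ[R] R, ∀ s, algebraMap R K (ψ s) = M s := by
    intro M hM
    refine ⟨e.symm.toLinearMap ∘ₗ M.codRestrict RK hM, fun s => ?_⟩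
    exact hes ⟨M s, hM s⟩
  -- a nonzero functional shows `Φ ≠ 0`
  obtain ⟨f, hf1⟩ : ∃ f : L →ₗ[K] K, f 1 ≠ 0 := by
    by_contra h
    push_neg at h
    exact one_ne_zero ((Module.forall_dual_apply_eq_zero_iff K (1 : L)).mp h)
  let Mf : S →ₗ[R] K := (f.restrictScalars R) ∘ₗ ((Algebra.linearMap S L).restrictScalars R)
  obtain ⟨T, hT⟩ := Module.Finite.fg_top (R := R) (M := S)
  obtain ⟨d, hd⟩ := IsLocalization.exist_integer_multiples (nonZeroDivisors R) T
    (fun t : S => Mf t)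
  have hall : ∀ s : S, ((d : R) • Mf) s ∈ RK := by
    intro s
    have hsub : (T : Set S) ⊆ (RK.comap ((d : R) • Mf) : Set S) := by
      intro t ht
      obtain ⟨r, hr⟩ := hd t ht
      exact ⟨r, hr⟩
    have hs : s ∈ Submodule.span R (T : Set S) := by rw [hT]; trivial
    exact Submodule.span_le.mpr hsub hs
  obtain ⟨ψ0, hψ0⟩ := key ((d : R) • Mf) hall
  have hΦ0 : Φ ≠ 0 := by
    intro h0
    obtain ⟨s, hs⟩ := hgen ψ0
    have h1 := hs 1
    rw [h0] at h1
    have h2 := hψ0 1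
    rw [h1] at h2
    have h3 : ((d : R) • Mf) 1 = algebraMap R K (d : R) * f 1 := by
      have : Mf 1 = f 1 := by
        simp [Mf]
      rw [LinearMap.smul_apply, this, Algebra.smul_def]
    rw [h3] at h2
    exact (mul_ne_zero (IsFractionRing.to_map_ne_zero_of_mem_nonZeroDivisors d.2) hf1) h2.symm
  -- the main argument
  let Mx : S →ₗ[R] K := (Φ.restrictScalars R) ∘ₗ ((LinearMap.mulLeft K x).restrictScalars R) ∘ₗ
      ((Algebra.linearMap S L).restrictScalars R)
  have hMxa : ∀ a : S, Mx a = Φ (x * algebraMap S L a) := fun a => rfl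
  have hMx : ∀ s : S, Mx s ∈ RK := by
    intro s
    obtain ⟨r, hr⟩ := hx s
    exact ⟨r, by rw [hMxa s, ← hr]; rfl⟩
  obtain ⟨ψx, hψx⟩ := key Mx hMx
  obtain ⟨s0, hs0⟩ := hgen ψx
  have hvan : ∀ a : S, Φ ((x - algebraMap S L s0) * algebraMap S L a) = 0 := by
    intro a
    have h1 : Φ (x * algebraMap S L a) = Φ (algebraMap S L s0 * algebraMap S L a) := by
      rw [← map_mul, ← hs0 a, hψx a, hMxa a]
    rw [sub_mul, map_sub, h1, sub_self]
  by_cases hxs : x = algebraMap S L s0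
  · exact ⟨s0, hxs.symm⟩
  · exfalso
    apply hΦ0
    have hF : Φ.comp (LinearMap.mulLeft K (x - algebraMap S L s0)) = 0 := by
      apply LinearMap.ext_on hspan
      rintro y ⟨a, rfl⟩
      simpa using hvan a
    ext l
    have h2 := LinearMap.congr_fun hF ((x - algebraMap S L s0)⁻¹ * l)
    simp only [LinearMap.comp_apply, LinearMap.mulLeft_apply, LinearMap.zero_apply] at h2
    rw [← mul_assoc, mul_inv_cancel₀ (sub_ne_zero.mpr hxs), one_mul] at h2
    simpa using h2
end

section
/- Let K ⊆ L be a finite separable extension of F-finite fields of characteristic p > 0. Suppose φ : K^{1/p^e} → K is a non-zero K-linear map with L-linear extension φ̄ : L^{1/p^e} → L, and ψ : L → K is a K-linear map satisfying ψ ∘ φ̄ = φ ∘ ψ^{1/p^e}. Then there exists u ∈ F_{p^e} ∩ L (i.e., u satisfying u^{p^e} = u) such that ψ(−) = Tr_{L/K}(u · −). -/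
private lemma trace_pow_char_pow_aux (p : ℕ) [Fact p.Prime] (e : ℕ) (K L : Type) [Field K]
    [Field L] [Algebra K L] [CharP K p] [FiniteDimensional K L] [Algebra.IsSeparable K L] (x : L) :
    Algebra.trace K L (x ^ p ^ e) = Algebra.trace K L x ^ p ^ e := by
  haveI : CharP (AlgebraicClosure K) p :=
    charP_of_injective_algebraMap (algebraMap K (AlgebraicClosure K)).injective p
  apply (algebraMap K (AlgebraicClosure K)).injective
  rw [map_pow (algebraMap K (AlgebraicClosure K)), trace_eq_sum_embeddings (E := AlgebraicClosure K),
    trace_eq_sum_embeddings (E := AlgebraicClosure K), sum_pow_char_pow]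
  simp [map_pow]

/-- Let `K ⊆ L` be a finite separable extension of `F`-finite fields of
characteristic `p > 0`, with `Kr = K^{1/p^e} ⊆ Lr = L^{1/p^e}` the fields of `p^e`-th roots.
Suppose `φ : K^{1/p^e} → K` is a non-zero `K`-linear map with `L`-linear extension
`φ̄ : L^{1/p^e} → L`, and `ψ : L → K` is `K`-linear with `p^e`-th root
`ψroot : L^{1/p^e} → K^{1/p^e}` satisfying `ψ ∘ φ̄ = φ ∘ ψ^{1/p^e}`.  Then there is
`u ∈ F_{p^e} ∩ L` (i.e. `u^{p^e} = u`) with `ψ(−) = Tr_{L/K}(u · −)`. -/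
theorem trace_is_only_commuting_map
    (p : ℕ) [Fact p.Prime] (e : ℕ)
    (K L Kr Lr : Type) [Field K] [Field L] [Field Kr] [Field Lr]
    [Algebra K L] [Algebra K Kr] [Algebra L Lr] [Algebra Kr Lr] [Algebra K Lr]
    [IsScalarTower K L Lr] [IsScalarTower K Kr Lr]
    [CharP K p]
    [FiniteDimensional K L] [Algebra.IsSeparable K L]
    [FiniteDimensional K Kr] [FiniteDimensional L Lr]
    (hKr : ∀ x : Kr, x ^ p ^ e ∈ (algebraMap K Kr).range)
    (hKr' : ∀ a : K, ∃ x : Kr, x ^ p ^ e = algebraMap K Kr a)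
    (hLr : ∀ x : Lr, x ^ p ^ e ∈ (algebraMap L Lr).range)
    (hLr' : ∀ a : L, ∃ x : Lr, x ^ p ^ e = algebraMap L Lr a)
    (φ : Kr →ₗ[K] K) (hφ : φ ≠ 0)
    (φbar : Lr →ₗ[L] L)
    (hext : ∀ x : Kr, φbar (algebraMap Kr Lr x) = algebraMap K L (φ x))
    (ψ : L →ₗ[K] K)
    (ψroot : Lr →ₗ[Kr] Kr)
    (hψroot : ∀ (x : L) (X : Lr),
      X ^ p ^ e = algebraMap L Lr x → (ψroot X) ^ p ^ e = algebraMap K Kr (ψ x))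
    (hcomm : ∀ X : Lr, ψ (φbar X) = φ (ψroot X)) :
    ∃ u : L, u ^ p ^ e = u ∧ ∀ x : L, ψ x = Algebra.trace K L (u * x) := by
  classical
  haveI charL : CharP L p := charP_of_injective_algebraMap (algebraMap K L).injective p
  haveI charKr : CharP Kr p := charP_of_injective_algebraMap (algebraMap K Kr).injective p
  haveI charLr : CharP Lr p := charP_of_injective_algebraMap (algebraMap L Lr).injective p
  -- Frobenius injectivity
  have frobKr : ∀ x y : Kr, x ^ p ^ e = y ^ p ^ e → x = y := by
    intro x y h
    have h2 : (x - y) ^ p ^ e = 0 := by rw [sub_pow_char_pow, h, sub_self]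
    exact sub_eq_zero.mp ((pow_eq_zero_iff (pow_ne_zero e (Nat.Prime.ne_zero Fact.out))).mp h2)
  have frobLr : ∀ x y : Lr, x ^ p ^ e = y ^ p ^ e → x = y := by
    intro x y h
    have h2 : (x - y) ^ p ^ e = 0 := by rw [sub_pow_char_pow, h, sub_self]
    exact sub_eq_zero.mp ((pow_eq_zero_iff (pow_ne_zero e (Nat.Prime.ne_zero Fact.out))).mp h2)
  -- the "p^e-power" maps downwards and the root maps upwards
  have hKr2 : ∀ X : Kr, ∃ a : K, algebraMap K Kr a = X ^ p ^ e := fun X => hKr X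
  choose ρK hρK using hKr2
  have hLr2 : ∀ X : Lr, ∃ a : L, algebraMap L Lr a = X ^ p ^ e := fun X => hLr X
  choose ρL hρL using hLr2
  choose ηK hηK using hKr'
  choose ηL hηL using hLr'
  have hρηK : ∀ a : K, ρK (ηK a) = a :=
    fun a => (algebraMap K Kr).injective (by rw [hρK, hηK])
  have hηρK : ∀ X : Kr, ηK (ρK X) = X := fun X => frobKr _ _ (by rw [hηK, hρK])
  have hρηL : ∀ a : L, ρL (ηL a) = a :=
    fun a => (algebraMap L Lr).injective (by rw [hρL, hηL])
  have hηKadd : ∀ a b : K, ηK (a + b) = ηK a + ηK b :=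
    fun a b => frobKr _ _ (by rw [hηK, add_pow_char_pow, hηK, hηK, map_add])
  have hηKsub : ∀ a b : K, ηK (a - b) = ηK a - ηK b :=
    fun a b => frobKr _ _ (by rw [hηK, sub_pow_char_pow, hηK, hηK, map_sub])
  have hηKmul : ∀ a b : K, ηK (a * b) = ηK a * ηK b :=
    fun a b => frobKr _ _ (by rw [hηK, mul_pow, hηK, hηK, map_mul])
  have hηLadd : ∀ a b : L, ηL (a + b) = ηL a + ηL b :=
    fun a b => frobLr _ _ (by rw [hηL, add_pow_char_pow, hηL, hηL, map_add])
  have hηLmul : ∀ a b : L, ηL (a * b) = ηL a * ηL b :=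
    fun a b => frobLr _ _ (by rw [hηL, mul_pow, hηL, hηL, map_mul])
  have hηρL : ∀ X : Lr, ηL (ρL X) = X := fun X => frobLr _ _ (by rw [hηL, hρL])
  -- ring equivalences
  let eK : K ≃+* Kr :=
    { toFun := ηK, invFun := ρK, left_inv := hρηK, right_inv := hηρK,
      map_mul' := hηKmul, map_add' := hηKadd }
  let eL : L ≃+* Lr :=
    { toFun := ηL, invFun := ρL, left_inv := hρηL, right_inv := hηρL,
      map_mul' := hηLmul, map_add' := hηLadd }
  have hcompat : (algebraMap Kr Lr).comp (eK : K →+* Kr) = (eL : L →+* Lr).comp (algebraMap K L) := by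
    ext a
    apply frobLr
    show ((algebraMap Kr Lr) (ηK a)) ^ p ^ e = (ηL ((algebraMap K L) a)) ^ p ^ e
    rw [← map_pow, hηK, hηL, ← IsScalarTower.algebraMap_apply, ← IsScalarTower.algebraMap_apply]
  haveI hsepr : Algebra.IsSeparable Kr Lr := Algebra.IsSeparable.of_equiv_equiv eK eL hcompat
  -- spanning Lr over K by products
  set S : Set Lr := Set.range (fun z : L × Kr => algebraMap L Lr z.1 * algebraMap Kr Lr z.2)
    with hSdef
  have hspan1 : Submodule.span Kr (Set.range (fun X : Lr => X ^ p ^ e)) = ⊤ :=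
    Field.span_map_pow_expChar_pow_eq_top_of_isSeparable p e (v := (id : Lr → Lr))
      (by rw [Set.range_id, Submodule.span_univ])
  have hspan2 : Submodule.span Kr (Set.range (algebraMap L Lr)) = ⊤ := by
    rw [eq_top_iff, ← hspan1, Submodule.span_le]
    rintro _ ⟨X, rfl⟩
    exact Submodule.subset_span ⟨ρL X, hρL X⟩
  have hspanS : Submodule.span K S = ⊤ := by
    have hKrsmul : ∀ (c : Kr) (x : Lr), x ∈ Submodule.span K S → c • x ∈ Submodule.span K S := by
      intro c x hx
      induction hx using Submodule.span_induction with
      | mem y hy =>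
        obtain ⟨⟨l, d⟩, rfl⟩ := hy
        have : c • (algebraMap L Lr l * algebraMap Kr Lr d)
            = algebraMap L Lr l * algebraMap Kr Lr (c * d) := by
          rw [Algebra.smul_def, map_mul]; ring
        rw [this]
        exact Submodule.subset_span ⟨(l, c * d), rfl⟩
      | zero => simp
      | add y z _ _ hy hz => rw [smul_add]; exact Submodule.add_mem _ hy hz
      | smul a y _ hy =>
        have : c • (a • y) = a • (c • y) := by
          rw [Algebra.smul_def, Algebra.smul_def, Algebra.smul_def, Algebra.smul_def, mul_left_comm]
        rw [this]
        exact Submodule.smul_mem _ _ hy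
    rw [eq_top_iff]
    intro x hxtop
    clear hxtop
    have hx : x ∈ Submodule.span Kr (Set.range (algebraMap L Lr)) := by
      rw [hspan2]; trivial
    induction hx using Submodule.span_induction with
    | mem y hy =>
      obtain ⟨l, rfl⟩ := hy
      exact Submodule.subset_span ⟨(l, 1), by simp⟩
    | zero => simp
    | add y z _ _ hy hz => exact Submodule.add_mem _ hy hz
    | smul c y _ hy => exact hKrsmul c y hy
  -- Step I : find u
  set B := Algebra.traceForm K L with hBdef
  have hnd := traceForm_nondegenerate K L
  set u : L := (B.toDual hnd).symm ψ with hudef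
  have hu : ∀ x : L, ψ x = Algebra.trace K L (u * x) := by
    intro x
    have h1 : (B.toDual hnd) u = ψ := (B.toDual hnd).apply_symm_apply ψ
    rw [← h1]
    rfl
  -- additivity and semilinearity of the root-trace map
  have hρLadd : ∀ X Y : Lr, ρL (X + Y) = ρL X + ρL Y := fun X Y =>
    (algebraMap L Lr).injective (by rw [hρL, map_add, hρL, hρL, add_pow_char_pow])
  have hρLsmul : ∀ (a : K) (X : Lr), ρL (a • X) = (algebraMap K L a) ^ p ^ e * ρL X := by
    intro a X
    apply (algebraMap L Lr).injective
    rw [hρL, map_mul, map_pow, hρL, Algebra.smul_def, mul_pow, ← IsScalarTower.algebraMap_apply]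
  let Trootf : Lr → Kr := fun X => ηK (Algebra.trace K L (ρL X))
  have hηKpow : ∀ b : K, ηK (b ^ p ^ e) = algebraMap K Kr b :=
    fun b => frobKr _ _ (by rw [hηK, ← map_pow])
  have hTroot_smul : ∀ (a : K) (X : Lr), Trootf (a • X) = a • Trootf X := by
    intro a X
    show ηK (Algebra.trace K L (ρL (a • X))) = a • ηK (Algebra.trace K L (ρL X))
    rw [hρLsmul, ← map_pow, ← Algebra.smul_def, map_smul, smul_eq_mul, hηKmul, hηKpow,
      Algebra.smul_def]
  let Troot : Lr →ₗ[K] Kr :=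
    { toFun := Trootf
      map_add' := fun X Y => by show ηK _ = ηK _ + ηK _; rw [hρLadd, map_add, hηKadd]
      map_smul' := hTroot_smul }
  let T1 : Lr →ₗ[K] K := (Algebra.trace K L) ∘ₗ (φbar.restrictScalars K)
  let T2 : Lr →ₗ[K] K := φ ∘ₗ Troot
  -- the key lemma : trace ∘ φbar = φ ∘ Troot
  have hkey : T1 = T2 := by
    apply LinearMap.ext_on hspanS
    rintro _ ⟨⟨l, c⟩, rfl⟩
    show Algebra.trace K L (φbar (algebraMap L Lr l * algebraMap Kr Lr c))
      = φ (ηK (Algebra.trace K L (ρL (algebraMap L Lr l * algebraMap Kr Lr c))))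
    have h1 : algebraMap L Lr l * algebraMap Kr Lr c = l • algebraMap Kr Lr c :=
      (Algebra.smul_def l _).symm
    have hρLval : ρL (algebraMap L Lr l * algebraMap Kr Lr c)
        = l ^ p ^ e * algebraMap K L (ρK c) := by
      apply (algebraMap L Lr).injective
      rw [hρL, map_mul, map_pow, mul_pow, ← map_pow (algebraMap L Lr), ← map_pow (algebraMap Kr Lr),
        ← hρK, ← IsScalarTower.algebraMap_apply, IsScalarTower.algebraMap_apply K L Lr]
    rw [hρLval, h1, map_smul, hext, smul_eq_mul]
    -- LHS : trace (l * algebraMap (φ c)) ; RHS : φ (ηK (trace (l^q * algebraMap (ρK c))))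
    rw [mul_comm l, ← Algebra.smul_def, map_smul, smul_eq_mul]
    rw [mul_comm (l ^ p ^ e), ← Algebra.smul_def, map_smul, smul_eq_mul,
      trace_pow_char_pow_aux p e K L l, hηKmul, hηρK, hηKpow]
    rw [mul_comm c, ← Algebra.smul_def, map_smul, smul_eq_mul]
    exact mul_comm _ _
  have hkey' : ∀ X : Lr, Algebra.trace K L (φbar X) = φ (ηK (Algebra.trace K L (ρL X))) :=
    fun X => DFunLike.congr_fun hkey X
  -- Step III
  have main : ∀ y : L, φ (ηK (Algebra.trace K L (u ^ p ^ e * y)))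
      = φ (ηK (Algebra.trace K L (u * y))) := by
    intro y
    set X := ηL y with hXdef
    have hXq : X ^ p ^ e = algebraMap L Lr y := hηL y
    have h1 : ψroot X = ηK (ψ y) := frobKr _ _ (by rw [hψroot y X hXq, hηK])
    have h2 : ψ (φbar X) = φ (ηK (ψ y)) := by rw [hcomm, h1]
    have h3 : φbar (u • X) = u * φbar X := by rw [map_smul, smul_eq_mul]
    have h4 : ρL (u • X) = u ^ p ^ e * y := by
      apply (algebraMap L Lr).injective
      rw [hρL, Algebra.smul_def, mul_pow, hXq, map_mul, map_pow]
    have h5 := hkey' (u • X)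
    rw [h3, h4] at h5
    rw [← h5, ← hu (φbar X), h2, hu y]
  have hzero : ∀ y : L, φ (ηK (Algebra.trace K L ((u ^ p ^ e - u) * y))) = 0 := by
    intro y
    have h6 : (u ^ p ^ e - u) * y = u ^ p ^ e * y - u * y := by ring
    rw [h6, map_sub (Algebra.trace K L), hηKsub, map_sub, main y, sub_self]
  have hw : u ^ p ^ e - u = 0 := by
    by_contra hw
    apply hφ
    ext c
    obtain ⟨y0, hy0⟩ := Algebra.trace_surjective K L (ρK c)
    set y : L := (u ^ p ^ e - u)⁻¹ * y0 with hydef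
    have htr : Algebra.trace K L ((u ^ p ^ e - u) * y) = ρK c := by
      rw [hydef, ← mul_assoc, mul_inv_cancel₀ hw, one_mul, hy0]
    have h8 := hzero y
    rw [htr, hηρK] at h8
    simpa using h8
  exact ⟨u, sub_eq_zero.mp hw, hu⟩
end

section
/- Let R = F₂[[x²(1+x³)]] ⊆ S = F₂[[x]], and write t = x²(1+x³). Define the R-linear map φ : R^{1/2} → R on the basis {1, t^{1/2}} by φ(1) = 0 and φ(t^{1/2}) = t, and define the S-linear map φ̄ : S^{1/2} → S on the basis {1, x^{1/2}} by φ̄(1) = 0 and φ̄(x^{1/2}) = 1 + x³. Then φ̄ extends φ, i.e., φ̄ restricted to R^{1/2} equals φ. -/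
open PowerSeries

section AuxWild
open Finset

private lemma zmod2_sq_coeff (a : PowerSeries (ZMod 2)) (n : ℕ) :
    coeff n (a ^ 2) = if 2 ∣ n then coeff (n / 2) a else 0 := by
  have hx : ∀ x : ZMod 2, x + x = 0 := by decide
  have hm : ∀ x : ZMod 2, x * x = x := by decide
  rw [sq, coeff_mul]
  rw [← Finset.sum_filter_add_sum_filter_not (antidiagonal n) (fun p => p.1 = p.2)]
  have h0 : ∑ p ∈ (antidiagonal n).filter (fun p => ¬ p.1 = p.2),
      coeff p.1 a * coeff p.2 a = 0 := by
    apply Finset.sum_involution (fun p _ => (p.2, p.1))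
    · intro p _
      rw [mul_comm]; exact hx _
    · intro p hp _
      simp only [mem_filter] at hp
      intro h
      exact hp.2 (congrArg Prod.snd h)
    · intro p hp
      simp only [mem_filter, Finset.HasAntidiagonal.mem_antidiagonal] at hp ⊢
      omega
    · intro p _; rfl
  rw [h0, add_zero]
  by_cases h : 2 ∣ n
  · obtain ⟨m, rfl⟩ := h
    have hs : (antidiagonal (2 * m)).filter (fun p => p.1 = p.2) = {(m, m)} := by
      ext ⟨i, j⟩
      simp only [mem_filter, Finset.HasAntidiagonal.mem_antidiagonal, Finset.mem_singleton, Prod.mk.injEq]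
      constructor
      · rintro ⟨h1, h2⟩; constructor <;> omega
      · rintro ⟨h1, h2⟩; constructor <;> omega
    have hd : 2 * m / 2 = m := by omega
    rw [hs, Finset.sum_singleton, if_pos ⟨m, rfl⟩, hm, hd]
  · have hs : (antidiagonal n).filter (fun p => p.1 = p.2) = ∅ := by
      ext ⟨i, j⟩
      simp only [mem_filter, Finset.HasAntidiagonal.mem_antidiagonal, Finset.notMem_empty, iff_false, not_and]
      intro hij heq
      exact h ⟨i, by omega⟩
    rw [hs, Finset.sum_empty, if_neg h]

private lemma zmod2_decomp (r : PowerSeries (ZMod 2)) :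
    ∃ a b : PowerSeries (ZMod 2), r = a ^ 2 * 1 + b ^ 2 * X := by
  refine ⟨mk fun n => coeff (2 * n) r,
    mk fun n => coeff (2 * n + 1) r, ?_⟩
  ext n
  rw [map_add, mul_one, zmod2_sq_coeff]
  rcases Nat.even_or_odd n with ⟨m, rfl⟩ | ⟨m, rfl⟩
  · have e : m + m = 2 * m := by omega
    rw [e]
    have h2 : (2 : ℕ) ∣ 2 * m := ⟨m, rfl⟩
    have hd : (2 * m) / 2 = m := by omega
    have hX0 : coeff (2 * m)
        ((mk fun n => coeff (2 * n + 1) r) ^ 2 * X) = 0 := by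
      rcases Nat.eq_zero_or_pos m with h | h
      · subst h
        simp [coeff_zero_mul_X]
      · have hk : 2 * m = (2 * m - 1) + 1 := by omega
        rw [hk, coeff_succ_mul_X, zmod2_sq_coeff]
        have hnd : ¬ (2 : ℕ) ∣ 2 * m - 1 := by omega
        rw [if_neg hnd]
    rw [if_pos h2, hd, coeff_mk, hX0, add_zero]
  · have h2 : ¬ (2 : ℕ) ∣ 2 * m + 1 := by omega
    rw [if_neg h2, zero_add, coeff_succ_mul_X, zmod2_sq_coeff]
    have h3 : (2 : ℕ) ∣ 2 * m := ⟨m, rfl⟩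
    have hd : 2 * m / 2 = m := by omega
    rw [if_pos h3, hd, coeff_mk]

end AuxWild

/-- Let `R = F₂[[t]] ⊆ S = F₂[[x]]` via `t = x²(1+x³)`.
We encode `R^{1/2}` (resp. `S^{1/2}`) as `R` (resp. `S`) itself, an element `m` standing for
`m^{1/2}`; the module structure is twisted by Frobenius, so an additive map
`g : R → R` with `g(r² · m) = r · g(m)` is exactly an `R`-linear map `R^{1/2} → R`.
The map `φ` with `φ(1) = 0`, `φ(t^{1/2}) = t` corresponds to `g` with `g 1 = 0`, `g t = t`,
and the map `φ̄` with `φ̄(1) = 0`, `φ̄(x^{1/2}) = 1 + x³` corresponds to `f` with `f 1 = 0`,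
`f X = 1 + X³`.  Then `φ̄` extends `φ`: for every `r ∈ R`, `f(ρ(r)) = ρ(g(r))`, where
`ρ : R → S` is the inclusion sending `t` to `x²(1+x³)`. -/
theorem wild_ramification_extension_example
    (ρ : PowerSeries (ZMod 2) →+* PowerSeries (ZMod 2))
    (hρ : ρ (X : PowerSeries (ZMod 2)) = X ^ 2 * (1 + X ^ 3))
    (g : PowerSeries (ZMod 2) → PowerSeries (ZMod 2))
    (hg_add : ∀ a b, g (a + b) = g a + g b)
    (hg_lin : ∀ r m, g (r ^ 2 * m) = r * g m)
    (hg1 : g 1 = 0) (hgt : g X = X)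
    (f : PowerSeries (ZMod 2) → PowerSeries (ZMod 2))
    (hf_add : ∀ a b, f (a + b) = f a + f b)
    (hf_lin : ∀ s m, f (s ^ 2 * m) = s * f m)
    (hf1 : f 1 = 0) (hfx : f X = 1 + X ^ 3) :
    ∀ r : PowerSeries (ZMod 2), f (ρ r) = ρ (g r) := by
  have hfρX : f (ρ X) = ρ X := by
    have hX : ρ (X : PowerSeries (ZMod 2)) = X ^ 2 * 1 + (X ^ 2) ^ 2 * X := by
      rw [hρ]; ring
    rw [hX, hf_add, hf_lin, hf_lin, hf1, hfx]
    ring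
  intro r
  obtain ⟨a, b, rfl⟩ := zmod2_decomp r
  rw [hg_add, hg_lin, hg_lin, hg1, hgt, map_add, map_mul, map_mul, map_pow, map_pow,
    map_one, hf_add, hf_lin, hf_lin, hf1, hfρX, map_add, map_mul, map_mul, map_zero]
end

section
/- Let R ⊆ S be a module-finite, generically separable inclusion of F-finite normal domains of characteristic p > 0 with fraction fields K ⊆ L, and let φ : R^{1/p^e} → R be an R-linear map. Then φ extends to an S-linear map φ̄ : S^{1/p^e} → S if and only if for every height-one prime q of S lying over p in R, the localized map φ : (R_p)^{1/p^e} → R_p extends to an S_q-linear map (S_q)^{1/p^e} → S_q. -/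
/-- In a Noetherian integrally closed domain, an element of the fraction field that lies in
every localization at a height-one prime lies in the ring. -/
lemma exists_algebraMap_eq_of_codim_one
    {S L : Type} [CommRing S] [IsDomain S] [IsNoetherianRing S]
    [IsIntegrallyClosed S] [Field L] [Algebra S L] [IsFractionRing S L] (y : L)
    (h : ∀ q : Ideal S, q.IsPrime → q ≠ ⊥ →
      (∀ q' : Ideal S, q'.IsPrime → q' < q → q' = ⊥) →
      ∃ s t : S, t ∉ q ∧ y * algebraMap S L t = algebraMap S L s) :
    ∃ s : S, algebraMap S L s = y := by
  by_contra hy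
  push_neg at hy
  have hinj : Function.Injective (algebraMap S L) := IsFractionRing.injective S L
  -- the "denominator ideal" of an element of `L`
  set D : L → Ideal S := fun z =>
    Submodule.comap (LinearMap.toSpanSingleton S L z)
      (LinearMap.range (Algebra.linearMap S L)) with hDdef
  have hmem : ∀ (z : L) (u : S),
      u ∈ D z ↔ ∃ s : S, algebraMap S L s = algebraMap S L u * z := by
    intro z u
    simp only [hDdef, Submodule.mem_comap, LinearMap.mem_range,
      LinearMap.toSpanSingleton_apply, Algebra.linearMap_apply, Algebra.smul_def]
  -- elements stabilizing a nonzero ideal are in `S`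
  have hint : ∀ (z : L) (q' : Ideal S), q' ≠ ⊥ →
      (∀ u ∈ q', ∃ d ∈ q', algebraMap S L d = algebraMap S L u * z) →
      ∃ s : S, algebraMap S L s = z := by
    intro z q' hq' hstab
    have hz : IsIntegral S z := by
      refine isIntegral_of_smul_mem_submodule
        (Submodule.map (Algebra.linearMap S L) q') ?_
        ((IsNoetherian.noetherian q').map _) z ?_
      · obtain ⟨u, hu, hu0⟩ := Submodule.exists_mem_ne_zero_of_ne_bot hq'
        refine Submodule.ne_bot_iff _ |>.mpr ⟨algebraMap S L u, ?_, ?_⟩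
        · exact Submodule.mem_map_of_mem hu
        · simpa using fun h => hu0 (hinj (by simpa using h))
      · rintro n hn
        obtain ⟨u, hu, rfl⟩ := Submodule.mem_map.mp hn
        obtain ⟨d, hd, hdz⟩ := hstab u hu
        refine Submodule.mem_map.mpr ⟨d, hd, ?_⟩
        simp only [Algebra.linearMap_apply] at *
        rw [hdz, smul_eq_mul, mul_comm]
    exact IsIntegrallyClosed.isIntegral_iff.mp hz
  -- choose a maximal denominator ideal above `D y`
  set Sig : Set (Ideal S) :=
    {I | ∃ z : L, (∀ s : S, algebraMap S L s ≠ z) ∧ D y ≤ D z ∧ I = D z} with hSigDef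
  have hne : Sig.Nonempty := ⟨D y, y, hy, le_rfl, rfl⟩
  obtain ⟨q, hqSig, hqmax⟩ :=
    (set_has_maximal_iff_noetherian.mpr (inferInstance : IsNoetherian S S)) Sig hne
  obtain ⟨z, hz, hyz, rfl⟩ := hqSig
  -- `D z` is a proper nonzero prime ideal
  have hone : (1 : S) ∉ D z := by
    intro h1
    obtain ⟨s, hs⟩ := (hmem z 1).mp h1
    exact hz s (by simpa using hs)
  have hqprime : (D z).IsPrime := by
    constructor
    · exact fun ht => hone (ht ▸ Submodule.mem_top)
    · intro a b hab
      by_cases hb : b ∈ D z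
      · exact Or.inr hb
      · left
        set z' : L := algebraMap S L b * z with hz'def
        have hle : D z ≤ D z' := by
          intro u hu
          obtain ⟨s, hs⟩ := (hmem z u).mp hu
          refine (hmem z' u).mpr ⟨b * s, ?_⟩
          rw [map_mul, hs, hz'def]; ring
        have hz' : ∀ s : S, algebraMap S L s ≠ z' := by
          intro s hs
          exact hb ((hmem z b).mpr ⟨s, by rw [hs]⟩)
        have hmemSig : D z' ∈ Sig := ⟨z', hz', le_trans hyz hle, rfl⟩
        have heq : D z = D z' := by
          rcases hle.lt_or_eq with hlt | heq
          · exact absurd hlt (hqmax _ hmemSig)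
          · exact heq
        rw [heq]
        refine (hmem z' a).mpr ?_
        obtain ⟨s, hs⟩ := (hmem z (a * b)).mp hab
        exact ⟨s, by rw [hs, hz'def, map_mul]; ring⟩
  have hqne : D z ≠ ⊥ := by
    obtain ⟨⟨n, d⟩, hnd⟩ := IsLocalization.surj (nonZeroDivisors S) z
    refine (Submodule.ne_bot_iff _).mpr ⟨(d : S), (hmem z d).mpr ⟨n, ?_⟩, ?_⟩
    · rw [← hnd]; ring
    · exact nonZeroDivisors.ne_zero d.2
  -- `D z` has height one
  have hq1 : ∀ q' : Ideal S, q'.IsPrime → q' < D z → q' = ⊥ := by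
    intro q' hq'prime hlt
    by_contra hq'ne
    -- step 1: find `w₀ ∈ D z` with `z·w₀ = c₀ ∉ D z`
    by_cases hstab : ∀ u ∈ D z, ∀ c : S, algebraMap S L c = algebraMap S L u * z → c ∈ D z
    · obtain ⟨s, hs⟩ := hint z (D z) hqne (fun u hu => by
        obtain ⟨c, hc⟩ := (hmem z u).mp hu
        exact ⟨c, hstab u hu c hc, hc⟩)
      exact hz s hs
    push_neg at hstab
    obtain ⟨w₀, hw₀, c₀, hc₀eq, hc₀⟩ := hstab
    -- step 2: find `w ∈ D z \ q'` with `z·w = c ∉ q'`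
    have hq'le : q' ≤ D z := hlt.le
    obtain ⟨w, c, hwDz, hwq', hceq, hcq'⟩ :
        ∃ w c : S, w ∈ D z ∧ w ∉ q' ∧
          algebraMap S L c = algebraMap S L w * z ∧ c ∉ q' := by
      by_cases hw₀q' : w₀ ∈ q'
      · obtain ⟨w₁, hw₁q, hw₁q'⟩ := SetLike.exists_of_lt hlt
        obtain ⟨c₁, hc₁⟩ := (hmem z w₁).mp hw₁q
        by_cases hc₁q' : c₁ ∈ q'
        · refine ⟨w₀ + w₁, c₀ + c₁, add_mem hw₀ hw₁q, ?_, ?_, ?_⟩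
          · intro hmem'
            exact hw₁q' (by simpa using sub_mem hmem' hw₀q')
          · rw [map_add, map_add, hc₀eq, hc₁]; ring
          · intro hmem'
            exact hc₀ (hq'le (by simpa using sub_mem hmem' hc₁q'))
        · exact ⟨w₁, c₁, hw₁q, hw₁q', hc₁, hc₁q'⟩
      · exact ⟨w₀, c₀, hw₀, hw₀q', hc₀eq, fun hc => hc₀ (hq'le hc)⟩
    -- step 3: `z` stabilizes `q'`, so `z ∈ S`, contradiction
    obtain ⟨s, hs⟩ := hint z q' hq'ne (fun u hu => by
      obtain ⟨d, hd⟩ := (hmem z u).mp (hq'le hu)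
      refine ⟨d, ?_, hd⟩
      have hdw : d * w = u * c := by
        apply hinj
        rw [map_mul, map_mul, hd, hceq]; ring
      have : d * w ∈ q' := hdw ▸ Ideal.mul_mem_right _ _ hu
      exact (hq'prime.mem_or_mem this).resolve_right hwq')
    exact hz s hs
  -- conclude: the hypothesis at `q = D z` contradicts `D y ≤ D z`
  obtain ⟨s, t, htq, hts⟩ := h (D z) hqprime hqne hq1
  exact htq (hyz ((hmem y t).mpr ⟨s, by rw [← hts]; ring⟩))

/-- Let `R ⊆ S` be a module-finite, generically separable inclusion of
`F`-finite normal (Noetherian, integrally closed) domains of characteristic `p > 0` with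
fraction fields `K ⊆ L`, and let `Kr = K^{1/p^e} ⊆ Lr = L^{1/p^e}` be the fields of `p^e`-th
roots.  An `R`-linear map `φ : R^{1/p^e} → R` is encoded by its generic extension: a
`K`-linear map `φ : Kr → K` carrying `R^{1/p^e} = {x : x^{p^e} ∈ R}` into `R`, together with
its unique generic `L`-linear extension `φbar : Lr → L`.  Then `φ` extends to an `S`-linear
map `S^{1/p^e} → S` (i.e. `φbar` carries `S^{1/p^e}` into `S`) if and only if for every
height-one prime `q` of `S`, the extension exists after localizing (i.e. `φbar` carries
`(S_q)^{1/p^e} = {x : x^{p^e} ∈ S_q}` into `S_q`). -/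
theorem extension_iff_extension_in_codim_one
    (p : ℕ) [Fact p.Prime] (e : ℕ) (he : 1 ≤ e)
    (R S K L Kr Lr : Type)
    [CommRing R] [CommRing S] [IsDomain R] [IsDomain S]
    [IsNoetherianRing R] [IsNoetherianRing S]
    [IsIntegrallyClosed R] [IsIntegrallyClosed S]
    [CharP R p]
    [Algebra R S] (hRS : Function.Injective (algebraMap R S)) [Module.Finite R S]
    [Field K] [Field L] [Field Kr] [Field Lr]
    [Algebra R K] [IsFractionRing R K] [Algebra S L] [IsFractionRing S L]
    [Algebra K L] [Algebra R L] [IsScalarTower R K L] [IsScalarTower R S L]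
    [Algebra K Kr] [Algebra L Lr] [Algebra Kr Lr] [Algebra K Lr]
    [IsScalarTower K Kr Lr] [IsScalarTower K L Lr]
    [Algebra R Kr] [IsScalarTower R K Kr]
    [Algebra S Lr] [IsScalarTower S L Lr]
    -- generic separability and `F`-finiteness
    [FiniteDimensional K L] [Algebra.IsSeparable K L]
    [FiniteDimensional K Kr] [FiniteDimensional L Lr]
    -- `Kr = K^{1/p^e}` and `Lr = L^{1/p^e}`
    (hKr : ∀ x : Kr, x ^ p ^ e ∈ (algebraMap K Kr).range)
    (hKr' : ∀ a : K, ∃ x : Kr, x ^ p ^ e = algebraMap K Kr a)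
    (hLr : ∀ x : Lr, x ^ p ^ e ∈ (algebraMap L Lr).range)
    (hLr' : ∀ a : L, ∃ x : Lr, x ^ p ^ e = algebraMap L Lr a)
    -- the map `φ : R^{1/p^e} → R`, given via its generic extension
    (φ : Kr →ₗ[K] K)
    (hφR : ∀ x : Kr, x ^ p ^ e ∈ (algebraMap R Kr).range → φ x ∈ (algebraMap R K).range)
    -- its unique generic extension to `L^{1/p^e}`
    (φbar : Lr →ₗ[L] L)
    (hext : ∀ x : Kr, φbar (algebraMap Kr Lr x) = algebraMap K L (φ x)) :
    (∀ x : Lr, x ^ p ^ e ∈ (algebraMap S Lr).range → φbar x ∈ (algebraMap S L).range) ↔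
    (∀ q : Ideal S, q.IsPrime → q ≠ ⊥ →
      (∀ q' : Ideal S, q'.IsPrime → q' < q → q' = ⊥) →
      ∀ x : Lr,
        (∃ s t : S, t ∉ q ∧ x ^ p ^ e * algebraMap S Lr t = algebraMap S Lr s) →
        ∃ s t : S, t ∉ q ∧ φbar x * algebraMap S L t = algebraMap S L s) := by
  have hpe : 1 ≤ p ^ e := Nat.one_le_pow e p (Fact.out : p.Prime).pos
  constructor
  · -- global extension ⇒ local extension everywhere
    intro H q _ _ _ x ⟨s, t, htq, hx⟩
    set x' : Lr := x * algebraMap S Lr t with hx'def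
    have hx'pow : x' ^ p ^ e ∈ (algebraMap S Lr).range := by
      refine ⟨s * t ^ (p ^ e - 1), ?_⟩
      have ht : (algebraMap S Lr t) ^ p ^ e
          = algebraMap S Lr t * algebraMap S Lr (t ^ (p ^ e - 1)) := by
        rw [← map_pow, ← map_mul, ← pow_succ', Nat.sub_add_cancel hpe]
      rw [hx'def, mul_pow, ht, ← mul_assoc, hx, map_mul]
    obtain ⟨s', hs'⟩ := H x' hx'pow
    have hx' : x' = (algebraMap S L t) • x := by
      rw [hx'def, Algebra.smul_def, ← IsScalarTower.algebraMap_apply, mul_comm]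
    rw [hx', map_smul, smul_eq_mul] at hs'
    exact ⟨s', t, htq, by rw [mul_comm]; exact hs'.symm⟩
  · -- local extension everywhere ⇒ global extension
    intro H x hx
    obtain ⟨s₀, hs₀⟩ := hx
    have key := exists_algebraMap_eq_of_codim_one (S := S) (L := L) (φbar x) ?_
    · obtain ⟨s, hs⟩ := key
      exact ⟨s, hs⟩
    · intro q hq hqne hq1
      refine H q hq hqne hq1 x ⟨s₀, 1, ?_, by rw [map_one, mul_one, hs₀]⟩
      intro h1
      exact hq.ne_top ((Ideal.eq_top_iff_one q).mpr h1)
end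

section
/- Let R = F₃[y] ⊆ S = F₃[x] via y ↦ x². An R-linear map φ : R^{1/3} → R (determined on the free basis 1, y^{1/3}, y^{2/3} of R^{1/3} over R) extends to an S-linear map φ̄ : S^{1/3} → S if and only if y divides φ(y^{2/3}) in R. Moreover, when the extension exists it is given on the free basis 1, x^{1/3}, x^{2/3} of S^{1/3} over S by φ̄(1) = φ(1), φ̄(x^{1/3}) = φ(y^{2/3})/x, and φ̄(x^{2/3}) = φ(y^{1/3}). -/
open Polynomial Finset

abbrev P3 := Polynomial (ZMod 3)

lemma cube_eq_expand (s : P3) : s ^ 3 = Polynomial.expand (ZMod 3) 3 s := by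
  have h := Polynomial.map_frobenius_expand 3 s (R := ZMod 3)
  rw [← h]
  ext n
  rw [Polynomial.coeff_map]
  simp [frobenius_def, ZMod.pow_card]

lemma coeff_cube (s : P3) (n : ℕ) :
    (s ^ 3).coeff n = if 3 ∣ n then s.coeff (n / 3) else 0 := by
  rw [cube_eq_expand, Polynomial.coeff_expand (by norm_num)]

noncomputable def Tc (j : ℕ) (m : P3) : P3 :=
  ⟨AddMonoidAlgebra.ofCoeff (Finsupp.comapDomain (fun i => 3 * i + j) m.toFinsupp.coeff
    (fun a _ b _ h => by simp only at h; omega))⟩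

lemma coeff_Tc (j : ℕ) (m : P3) (i : ℕ) : (Tc j m).coeff i = m.coeff (3 * i + j) := rfl

lemma Tc_add (j : ℕ) (a b : P3) : Tc j (a + b) = Tc j a + Tc j b := by
  ext i
  simp [coeff_Tc, Polynomial.coeff_add]

lemma Tc_smul (j : ℕ) (hj : j < 3) (s m : P3) : Tc j (s ^ 3 * m) = s * Tc j m := by
  ext i
  rw [coeff_Tc, Polynomial.coeff_mul, Polynomial.coeff_mul]
  simp only [coeff_Tc]
  rw [show ∑ x ∈ antidiagonal i, s.coeff x.1 * m.coeff (3 * x.2 + j)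
      = ∑ x ∈ (antidiagonal i).image (fun x => (3 * x.1, 3 * x.2 + j)),
          (s ^ 3).coeff x.1 * m.coeff x.2 from ?_]
  · refine (Finset.sum_subset ?_ ?_).symm
    · intro x hx
      simp only [Finset.mem_image, Finset.HasAntidiagonal.mem_antidiagonal] at hx ⊢
      obtain ⟨y, hy, rfl⟩ := hx
      omega
    · intro x hx hnx
      simp only [Finset.HasAntidiagonal.mem_antidiagonal] at hx
      rw [coeff_cube]
      rw [if_neg, zero_mul]
      intro hdvd
      apply hnx
      simp only [Finset.mem_image, Finset.HasAntidiagonal.mem_antidiagonal]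
      obtain ⟨a, ha⟩ := hdvd
      exact ⟨(a, i - a), by omega, by rw [Prod.ext_iff]; constructor <;> simp <;> omega⟩
  · rw [Finset.sum_image (by intro a _ b _ h; simp only [Prod.mk.injEq] at h; ext <;> omega)]
    refine Finset.sum_congr rfl fun x hx => ?_
    rw [coeff_cube, if_pos ⟨x.1, rfl⟩, Nat.mul_div_cancel_left _ (by norm_num)]

lemma coeff_cube_mul_Xpow (s : P3) (k n : ℕ) (hk : k < 3) :
    (s ^ 3 * X ^ k).coeff n = if n % 3 = k then s.coeff (n / 3) else 0 := by
  rw [Polynomial.coeff_mul_X_pow', coeff_cube]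
  split_ifs with h1 h2 h3 h4 <;> try rfl
  · congr 1; omega
  · omega
  · omega
  · omega

lemma Tc_decomp (m : P3) : (Tc 0 m) ^ 3 + (Tc 1 m) ^ 3 * X + (Tc 2 m) ^ 3 * X ^ 2 = m := by
  ext n
  rw [Polynomial.coeff_add, Polynomial.coeff_add,
    show (Tc 0 m) ^ 3 = (Tc 0 m) ^ 3 * X ^ 0 by ring,
    show (Tc 1 m) ^ 3 * X = (Tc 1 m) ^ 3 * X ^ 1 by ring,
    coeff_cube_mul_Xpow _ _ _ (by norm_num), coeff_cube_mul_Xpow _ _ _ (by norm_num),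
    coeff_cube_mul_Xpow _ _ _ (by norm_num)]
  simp only [coeff_Tc]
  split_ifs with h1 h2 h3 <;> try omega
  · rw [add_zero, add_zero]; congr 1; omega
  · rw [zero_add, add_zero]; congr 1; omega
  · rw [zero_add, zero_add]; congr 1; omega

lemma Tc_Xpow (j k : ℕ) (hj : j < 3) (hk : k < 3) :
    Tc j (X ^ k) = if j = k then 1 else 0 := by
  ext i
  rw [coeff_Tc, Polynomial.coeff_X_pow]
  split_ifs with h1 h2 h2 <;>
    simp only [Polynomial.coeff_one, Polynomial.coeff_zero] <;>
    first
      | rfl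
      | omega
      | (rw [if_pos (by omega)])
      | (rw [if_neg (by omega)])

lemma Tc_apply_decomp (j : ℕ) (hj : j < 3) (a b c : P3) :
    Tc j (a ^ 3 + b ^ 3 * X + c ^ 3 * X ^ 2)
      = a * (if j = 0 then 1 else 0) + b * (if j = 1 then 1 else 0)
        + c * (if j = 2 then 1 else 0) := by
  rw [show a ^ 3 = a ^ 3 * X ^ 0 by ring, show b ^ 3 * X = b ^ 3 * X ^ 1 by ring,
    Tc_add, Tc_add, Tc_smul _ hj, Tc_smul _ hj, Tc_smul _ hj,
    Tc_Xpow _ _ hj (by norm_num), Tc_Xpow _ _ hj (by norm_num), Tc_Xpow _ _ hj (by norm_num)]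

lemma Tc0_decomp (a b c : P3) : Tc 0 (a ^ 3 + b ^ 3 * X + c ^ 3 * X ^ 2) = a := by
  rw [Tc_apply_decomp 0 (by norm_num)]; norm_num

lemma Tc1_decomp (a b c : P3) : Tc 1 (a ^ 3 + b ^ 3 * X + c ^ 3 * X ^ 2) = b := by
  rw [Tc_apply_decomp 1 (by norm_num)]; norm_num

lemma Tc2_decomp (a b c : P3) : Tc 2 (a ^ 3 + b ^ 3 * X + c ^ 3 * X ^ 2) = c := by
  rw [Tc_apply_decomp 2 (by norm_num)]; norm_num

lemma aeval_coeff_zero (p : P3) :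
    (aeval (X ^ 2 : P3) p).coeff 0 = p.coeff 0 := by
  have h : aeval (X ^ 2 : P3) p = p.comp (X ^ 2) := by
    rw [Polynomial.aeval_def, Polynomial.comp, Polynomial.algebraMap_eq]
  rw [h, Polynomial.coeff_zero_eq_eval_zero, Polynomial.eval_comp]
  simp [Polynomial.coeff_zero_eq_eval_zero]


/-- Let `R = F₃[y] ⊆ S = F₃[x]` via `y ↦ x²`, encoded by the algebra map
`ρ = aeval (X²)`.  We encode `R^{1/3}` (resp. `S^{1/3}`) as `R` (resp. `S`) itself, an element
`m` standing for `m^{1/3}`; an additive map `g : R → R` with `g(r³·m) = r·g(m)` is exactly an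
`R`-linear map `φ : R^{1/3} → R` (with `φ(y^{i/3}) = g(yⁱ)`), and similarly for `S`.
Then `φ` extends to an `S`-linear `φ̄ : S^{1/3} → S` if and only if `y ∣ φ(y^{2/3})` in `R`;
moreover any extension `φ̄` satisfies `φ̄(1) = φ(1)`, `x·φ̄(x^{1/3}) = φ(y^{2/3})`
(i.e. `φ̄(x^{1/3}) = φ(y^{2/3})/x`) and `φ̄(x^{2/3}) = φ(y^{1/3})`. -/
theorem tame_extension_example
    (g : Polynomial (ZMod 3) → Polynomial (ZMod 3))
    (hg_add : ∀ a b, g (a + b) = g a + g b)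
    (hg_lin : ∀ r m, g (r ^ 3 * m) = r * g m) :
    ((∃ f : Polynomial (ZMod 3) → Polynomial (ZMod 3),
        (∀ a b, f (a + b) = f a + f b) ∧
        (∀ s m, f (s ^ 3 * m) = s * f m) ∧
        (∀ r : Polynomial (ZMod 3), f (aeval (X ^ 2 : Polynomial (ZMod 3)) r) =
          aeval (X ^ 2 : Polynomial (ZMod 3)) (g r))) ↔
      (X : Polynomial (ZMod 3)) ∣ g (X ^ 2)) ∧
    (∀ f : Polynomial (ZMod 3) → Polynomial (ZMod 3),
      (∀ a b, f (a + b) = f a + f b) →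
      (∀ s m, f (s ^ 3 * m) = s * f m) →
      (∀ r : Polynomial (ZMod 3), f (aeval (X ^ 2 : Polynomial (ZMod 3)) r) =
          aeval (X ^ 2 : Polynomial (ZMod 3)) (g r)) →
      f 1 = aeval (X ^ 2 : Polynomial (ZMod 3)) (g 1) ∧
      X * f X = aeval (X ^ 2 : Polynomial (ZMod 3)) (g (X ^ 2)) ∧
      f (X ^ 2) = aeval (X ^ 2 : Polynomial (ZMod 3)) (g X)) := by
  constructor
  · constructor
    · rintro ⟨f, hf_add, hf_lin, hf_comp⟩
      have h2 := hf_comp (X ^ 2)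
      rw [map_pow, Polynomial.aeval_X,
        show (((X : P3)) ^ 2) ^ 2 = X ^ 3 * X by ring, hf_lin] at h2
      have hdvd : (X : P3) ∣ aeval (X ^ 2 : P3) (g (X ^ 2)) := ⟨f X, h2.symm⟩
      rw [Polynomial.X_dvd_iff] at hdvd ⊢
      rw [← aeval_coeff_zero]
      exact hdvd
    · intro hX
      obtain ⟨Q, hQ⟩ := hX
      refine ⟨fun m => Tc 0 m * aeval (X ^ 2 : P3) (g 1)
          + Tc 1 m * (X * aeval (X ^ 2 : P3) Q)
          + Tc 2 m * aeval (X ^ 2 : P3) (g X), ?_, ?_, ?_⟩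
      · intro a b
        dsimp only
        rw [Tc_add, Tc_add, Tc_add]; ring
      · intro s m
        dsimp only
        rw [Tc_smul 0 (by norm_num), Tc_smul 1 (by norm_num), Tc_smul 2 (by norm_num)]
        ring
      · intro r
        dsimp only
        have hr := Tc_decomp r
        set A := Tc 0 r with hA
        set B := Tc 1 r with hB
        set C := Tc 2 r with hC
        have hρ : aeval (X ^ 2 : P3) r
            = (aeval (X ^ 2 : P3) A) ^ 3 + (X * aeval (X ^ 2 : P3) C) ^ 3 * X
              + (aeval (X ^ 2 : P3) B) ^ 3 * X ^ 2 := by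
          conv_lhs => rw [← hr]
          simp only [map_add, map_mul, map_pow, Polynomial.aeval_X]
          ring
        have hgr : g r = A * g 1 + B * g X + C * g (X ^ 2) := by
          conv_lhs => rw [← hr]
          rw [hg_add, hg_add, show A ^ 3 = A ^ 3 * 1 by ring, hg_lin, hg_lin, hg_lin]
        simp only [hρ, Tc0_decomp, Tc1_decomp, Tc2_decomp, hgr, hQ]
        simp only [map_add, map_mul, Polynomial.aeval_X]
        ring
  · intro f hf_add hf_lin hf_comp
    refine ⟨?_, ?_, ?_⟩
    · have h := hf_comp 1
      rwa [map_one] at h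
    · have h := hf_comp (X ^ 2)
      rwa [map_pow, Polynomial.aeval_X,
        show (((X : P3)) ^ 2) ^ 2 = X ^ 3 * X by ring, hf_lin] at h
    · have h := hf_comp X
      rwa [Polynomial.aeval_X] at h
end

section
/- Let R = k[x²] ⊆ S = k[x] with char k = 3, and define τ ∈ Hom_R(S, R) by τ(1)=1, τ(x)=y² where y = x². Define φ : R^{1/3} → R by φ(1)=1, φ(y^{1/3})=1, φ(y^{2/3})=y, with S-linear extension φ̄ : S^{1/3} → S given by φ̄(1)=1, φ̄(x^{1/3})=x, φ̄(x^{2/3})=1. Then although τ splits the inclusion R ⊆ S, the commutativity φ ∘ τ^{1/3} = τ ∘ φ̄ fails: specifically φ(τ^{1/3}(x^{1/3})) = y while τ(φ̄(x^{1/3})) = y². -/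
open Polynomial

/-- Let `R = F₃[y] ⊆ S = F₃[x]` via `y ↦ x²` (encoded by `ρ = aeval (X²)`,
with `y = X` in `R`).  We encode `p⁻ᵉ`-linear maps as in the `1/3`-root convention:
`g : R → R` (additive, `g(r³m) = r g(m)`) encodes `φ : R^{1/3} → R` with `φ(1)=1`,
`φ(y^{1/3})=1`, `φ(y^{2/3})=y`; `f : S → S` encodes its extension `φ̄` with `φ̄(1)=1`,
`φ̄(x^{1/3})=x`, `φ̄(x^{2/3})=1`; and `τ : S → R` (additive, `R`-linear) has `τ(1)=1`,
`τ(x)=y²`.  Then `τ` splits the inclusion `R ⊆ S` and `φ̄` extends `φ`, yet the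
commutativity `φ ∘ τ^{1/3} = τ ∘ φ̄` fails: `φ(τ^{1/3}(x^{1/3})) = y` while
`τ(φ̄(x^{1/3})) = y²`.  (Note `τ^{1/3}(m^{1/3}) = (τ m)^{1/3}`, so `φ(τ^{1/3}(m^{1/3}))`
is encoded by `g (τ m)`.) -/
theorem splitting_does_not_commute_example
    (τ : Polynomial (ZMod 3) → Polynomial (ZMod 3))
    (hτ_add : ∀ a b, τ (a + b) = τ a + τ b)
    (hτ_lin : ∀ (r s : Polynomial (ZMod 3)),
      τ (aeval (X ^ 2 : Polynomial (ZMod 3)) r * s) = r * τ s)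
    (hτ1 : τ 1 = 1) (hτx : τ X = X ^ 2)
    (g : Polynomial (ZMod 3) → Polynomial (ZMod 3))
    (hg_add : ∀ a b, g (a + b) = g a + g b)
    (hg_lin : ∀ r m, g (r ^ 3 * m) = r * g m)
    (hg1 : g 1 = 1) (hgy : g X = 1) (hgy2 : g (X ^ 2) = X)
    (f : Polynomial (ZMod 3) → Polynomial (ZMod 3))
    (hf_add : ∀ a b, f (a + b) = f a + f b)
    (hf_lin : ∀ s m, f (s ^ 3 * m) = s * f m)
    (hf1 : f 1 = 1) (hfx : f X = X) (hfx2 : f (X ^ 2) = 1) :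
    (∀ r : Polynomial (ZMod 3), τ (aeval (X ^ 2 : Polynomial (ZMod 3)) r) = r) ∧
    (∀ r : Polynomial (ZMod 3), f (aeval (X ^ 2 : Polynomial (ZMod 3)) r) =
        aeval (X ^ 2 : Polynomial (ZMod 3)) (g r)) ∧
    g (τ X) = X ∧ τ (f X) = X ^ 2 ∧ g (τ X) ≠ τ (f X) := by
  have ha3 : ∀ a : ZMod 3, a ^ 3 = a := by decide
  have cube : ∀ (a : ZMod 3) (m : ℕ),
      (C a * X ^ m : Polynomial (ZMod 3)) ^ 3 = C a * X ^ (3 * m) := by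
    intro a m
    rw [mul_pow, ← C_pow, ha3, ← pow_mul, mul_comm m 3]
  refine ⟨?_, ?_, ?_, ?_, ?_⟩
  · intro r
    have := hτ_lin r 1
    simpa [hτ1] using this
  · intro r
    induction r using Polynomial.induction_on' with
    | add p q hp hq => simp [map_add, hf_add, hg_add, hp, hq]
    | monomial n a =>
      rw [← C_mul_X_pow_eq_monomial]
      have key : ∀ (m s : ℕ),
          f (C a * X ^ (3 * m + s)) = (C a * X ^ m) * f (X ^ s) := by
        intro m s
        rw [pow_add, ← mul_assoc, ← cube a m, mul_assoc, hf_lin]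
        ring
      have keyg : ∀ (m s : ℕ),
          g (C a * X ^ (3 * m + s)) = (C a * X ^ m) * g (X ^ s) := by
        intro m s
        rw [pow_add, ← mul_assoc, ← cube a m, mul_assoc, hg_lin]
        ring
      have haev : ∀ m : ℕ, aeval (X ^ 2 : Polynomial (ZMod 3)) (C a * X ^ m)
          = C a * X ^ (2 * m) := by
        intro m
        simp [mul_comm m 2, pow_mul]
      obtain ⟨q, hq⟩ : ∃ q, n = 3 * q ∨ n = 3 * q + 1 ∨ n = 3 * q + 2 :=
        ⟨n / 3, by omega⟩
      rcases hq with h | h | h <;> subst h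
      · rw [haev, show 2 * (3 * q) = 3 * (2 * q) + 0 by ring, key,
          show (3:ℕ) * q = 3 * q + 0 by ring, keyg]
        simp [hf1, hg1, map_mul, map_pow, pow_mul]
      · rw [haev, show 2 * (3 * q + 1) = 3 * (2 * q) + 2 by ring, key, keyg]
        simp [hfx2, hgy, map_mul, map_pow, pow_mul]
      · rw [haev, show 2 * (3 * q + 2) = 3 * (2 * q + 1) + 1 by ring, key, keyg]
        simp [hfx, hgy2, map_mul, map_pow, pow_mul]
        ring
  · rw [hτx, hgy2]
  · rw [hfx, hτx]
  · rw [hτx, hfx, hgy2, hτx]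
    intro h
    have := congrArg natDegree h
    simp at this
end

section
/- Let R ⊆ S be a module-finite extension of Noetherian normal domains with R a DVR and S a semi-local Dedekind domain of characteristic p > 0, both F-finite. Let Ψ generate Hom_R(S, R) as an S-module, Φ_S generate Hom_S(S^{1/p^e}, S) as an S^{1/p^e}-module, and Φ_R generate Hom_R(R^{1/p^e}, R) as an R^{1/p^e}-module. Then Ψ ∘ Φ_S and Φ_R ∘ Ψ^{1/p^e} both generate Hom_R(S^{1/p^e}, R) as an S^{1/p^e}-module; in particular there is a unit u ∈ S with Ψ ∘ Φ_S (−) = Φ_R ∘ Ψ^{1/p^e}(u^{1/p^e} · −). -/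
theorem dual_injective_aux {R M : Type} [CommRing R] [Nontrivial R]
    [AddCommGroup M] [Module R M] [Module.Free R M]
    (x : M) (h : ∀ f : M →ₗ[R] R, f x = 0) : x = 0 := by
  let b := Module.Free.chooseBasis R M
  have hx : b.repr x = 0 := by
    ext i
    simpa using h (b.coord i)
  have := congrArg b.repr.symm hx
  simpa using this

/-- Let `R ⊆ S` be a module-finite extension with `R` a DVR and `S` a
semi-local Dedekind domain, of characteristic `p > 0`, both `F`-finite, with rings of
`p^e`-th roots `Rr = R^{1/p^e}` and `Sr = S^{1/p^e}`.  Let `Ψ` generate `Hom_R(S, R)` as an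
`S`-module, `Φ_S` generate `Hom_S(S^{1/p^e}, S)` as an `S^{1/p^e}`-module, and `Φ_R`
generate `Hom_R(R^{1/p^e}, R)` as an `R^{1/p^e}`-module; let `Ψroot : Sr → Rr` be the
`p^e`-th root of `Ψ`.  Then `Ψ ∘ Φ_S` and `Φ_R ∘ Ψ^{1/p^e}` both generate
`Hom_R(S^{1/p^e}, R)` as an `S^{1/p^e}`-module; in particular there is a unit `u ∈ S`
(with `p^e`-th root `v ∈ S^{1/p^e}`) such that `Ψ ∘ Φ_S(−) = Φ_R ∘ Ψ^{1/p^e}(u^{1/p^e}·−)`. -/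
theorem compositions_generate_dual
    (p : ℕ) [Fact p.Prime] (e : ℕ)
    (R S Rr Sr : Type)
    [CommRing R] [CommRing S] [CommRing Rr] [CommRing Sr]
    [IsDomain R] [IsDomain S] [IsDomain Rr] [IsDomain Sr]
    [IsDiscreteValuationRing R] [IsDedekindDomain S]
    (hsemilocal : {I : Ideal S | I.IsMaximal}.Finite)
    [CharP R p]
    [Algebra R S] (hRS : Function.Injective (algebraMap R S)) [Module.Finite R S]
    [Algebra R Rr] [Algebra S Sr] [Algebra Rr Sr] [Algebra R Sr]
    [IsScalarTower R Rr Sr] [IsScalarTower R S Sr]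
    (hRRr : Function.Injective (algebraMap R Rr))
    (hSSr : Function.Injective (algebraMap S Sr))
    (hRrSr : Function.Injective (algebraMap Rr Sr))
    -- `F`-finiteness
    [Module.Finite R Rr] [Module.Finite S Sr]
    -- `Rr = R^{1/p^e}` and `Sr = S^{1/p^e}`
    (hRr : ∀ x : Rr, x ^ p ^ e ∈ (algebraMap R Rr).range)
    (hRr' : ∀ a : R, ∃ x : Rr, x ^ p ^ e = algebraMap R Rr a)
    (hSr : ∀ x : Sr, x ^ p ^ e ∈ (algebraMap S Sr).range)
    (hSr' : ∀ a : S, ∃ x : Sr, x ^ p ^ e = algebraMap S Sr a)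
    -- the generators
    (Ψ : S →ₗ[R] R)
    (hΨ : ∀ θ : S →ₗ[R] R, ∃ a : S, ∀ b : S, θ b = Ψ (a * b))
    (ΦS : Sr →ₗ[S] S)
    (hΦS : ∀ θ : Sr →ₗ[S] S, ∃ a : Sr, ∀ b : Sr, θ b = ΦS (a * b))
    (ΦR : Rr →ₗ[R] R)
    (hΦR : ∀ θ : Rr →ₗ[R] R, ∃ a : Rr, ∀ b : Rr, θ b = ΦR (a * b))
    -- the `p^e`-th root of `Ψ`
    (Ψroot : Sr → Rr)
    (hΨroot : ∀ (x : S) (X : Sr),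
      X ^ p ^ e = algebraMap S Sr x → (Ψroot X) ^ p ^ e = algebraMap R Rr (Ψ x)) :
    (∀ θ : Sr →ₗ[R] R, ∃ a : Sr, ∀ b : Sr, θ b = Ψ (ΦS (a * b))) ∧
    (∀ θ : Sr →ₗ[R] R, ∃ a : Sr, ∀ b : Sr, θ b = ΦR (Ψroot (a * b))) ∧
    (∃ (u : S) (v : Sr), IsUnit u ∧ v ^ p ^ e = algebraMap S Sr u ∧
      ∀ b : Sr, Ψ (ΦS b) = ΦR (Ψroot (v * b))) := by
  classical
  have hp : p.Prime := Fact.out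
  have hq0 : p ^ e ≠ 0 := pow_ne_zero _ hp.ne_zero
  -- characteristic p everywhere
  haveI : CharP Rr p := charP_of_injective_algebraMap hRRr p
  haveI : CharP Sr p := charP_of_injective_algebraMap hRrSr p
  -- injectivity of Frobenius
  have frobRr : ∀ x y : Rr, x ^ p ^ e = y ^ p ^ e → x = y := by
    intro x y h
    have h2 : (x - y) ^ p ^ e = 0 := by rw [sub_pow_char_pow, h, sub_self]
    exact sub_eq_zero.mp (pow_eq_zero_iff hq0 |>.mp h2)
  have frobSr : ∀ x y : Sr, x ^ p ^ e = y ^ p ^ e → x = y := by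
    intro x y h
    have h2 : (x - y) ^ p ^ e = 0 := by rw [sub_pow_char_pow, h, sub_self]
    exact sub_eq_zero.mp (pow_eq_zero_iff hq0 |>.mp h2)
  -- roots and projections
  let projS : Sr → S := fun x => (hSr x).choose
  have projS_spec : ∀ x : Sr, algebraMap S Sr (projS x) = x ^ p ^ e :=
    fun x => (hSr x).choose_spec
  let rootS : S → Sr := fun s => (hSr' s).choose
  have rootS_spec : ∀ s : S, (rootS s) ^ p ^ e = algebraMap S Sr s :=
    fun s => (hSr' s).choose_spec
  let projR : Rr → R := fun x => (hRr x).choose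
  have projR_spec : ∀ x : Rr, algebraMap R Rr (projR x) = x ^ p ^ e :=
    fun x => (hRr x).choose_spec
  let rootR : R → Rr := fun r => (hRr' r).choose
  have rootR_spec : ∀ r : R, (rootR r) ^ p ^ e = algebraMap R Rr r :=
    fun r => (hRr' r).choose_spec
  have projS_root : ∀ s : S, projS (rootS s) = s :=
    fun s => hSSr (by rw [projS_spec, rootS_spec])
  have rootS_proj : ∀ x : Sr, rootS (projS x) = x :=
    fun x => frobSr _ _ (by rw [rootS_spec, projS_spec])
  have projR_root : ∀ r : R, projR (rootR r) = r :=
    fun r => hRRr (by rw [projR_spec, rootR_spec])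
  have projS_mul : ∀ x y : Sr, projS (x * y) = projS x * projS y := fun x y =>
    hSSr (by rw [map_mul, projS_spec, projS_spec, projS_spec, mul_pow])
  have projS_add : ∀ x y : Sr, projS (x + y) = projS x + projS y := fun x y =>
    hSSr (by rw [map_add, projS_spec, projS_spec, projS_spec, add_pow_char_pow])
  have projS_one : projS 1 = 1 := hSSr (by rw [projS_spec, one_pow, map_one])
  have projR_mul : ∀ x y : Rr, projR (x * y) = projR x * projR y := fun x y =>
    hRRr (by rw [map_mul, projR_spec, projR_spec, projR_spec, mul_pow])
  have projR_add : ∀ x y : Rr, projR (x + y) = projR x + projR y := fun x y =>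
    hRRr (by rw [map_add, projR_spec, projR_spec, projR_spec, add_pow_char_pow])
  have rootS_add : ∀ s t : S, rootS (s + t) = rootS s + rootS t := fun s t =>
    frobSr _ _ (by rw [rootS_spec, add_pow_char_pow, rootS_spec, rootS_spec, map_add])
  have rootS_alg : ∀ (r : R) (s : S),
      rootS (algebraMap R S r * s) = algebraMap Rr Sr (rootR r) * rootS s := by
    intro r s
    apply frobSr
    rw [rootS_spec, mul_pow, rootS_spec, ← map_pow, rootR_spec, map_mul,
      ← IsScalarTower.algebraMap_apply R S Sr, ← IsScalarTower.algebraMap_apply R Rr Sr]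
  -- basic Ψroot facts
  have Ψroot_pow : ∀ X : Sr, (Ψroot X) ^ p ^ e = algebraMap R Rr (Ψ (projS X)) :=
    fun X => hΨroot _ _ (projS_spec X).symm
  -- free module instances and separation results
  haveI : Module.IsTorsionFree R S := Module.isTorsionFree_iff_algebraMap_injective.mpr hRS
  haveI : Module.IsTorsionFree R Rr := Module.isTorsionFree_iff_algebraMap_injective.mpr hRRr
  have hRSr : Function.Injective (algebraMap R Sr) := by
    rw [IsScalarTower.algebraMap_eq R Rr Sr]
    exact hRrSr.comp hRRr
  haveI : Module.IsTorsionFree R Sr := Module.isTorsionFree_iff_algebraMap_injective.mpr hRSr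
  haveI : Module.Finite R Sr := Module.Finite.trans S Sr
  have sepS : ∀ c : S, (∀ s : S, Ψ (c * s) = 0) → c = 0 := by
    intro c hc
    refine dual_injective_aux (R := R) c fun f => ?_
    obtain ⟨a, ha⟩ := hΨ f
    rw [ha c, mul_comm]
    exact hc a
  have sepRr : ∀ c : Rr, (∀ r : Rr, ΦR (c * r) = 0) → c = 0 := by
    intro c hc
    refine dual_injective_aux (R := R) c fun f => ?_
    obtain ⟨a, ha⟩ := hΦR f
    rw [ha c, mul_comm]
    exact hc a
  have uniqS : ∀ c c' : S, (∀ s : S, Ψ (c * s) = Ψ (c' * s)) → c = c' := by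
    intro c c' h
    have : ∀ s : S, Ψ ((c - c') * s) = 0 := by
      intro s; rw [sub_mul, map_sub, h s, sub_self]
    exact sub_eq_zero.mp (sepS _ this)
  have uniqRr : ∀ c c' : Rr, (∀ r : Rr, ΦR (c * r) = ΦR (c' * r)) → c = c' := by
    intro c c' h
    have : ∀ r : Rr, ΦR ((c - c') * r) = 0 := by
      intro r; rw [sub_mul, map_sub, h r, sub_self]
    exact sub_eq_zero.mp (sepRr _ this)
  ----------------------------------------------------------------
  -- Part 1 : Ψ ∘ ΦS generates Hom_R(Sr, R)
  ----------------------------------------------------------------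
  have part1 : ∀ θ : Sr →ₗ[R] R, ∃ a : Sr, ∀ b : Sr, θ b = Ψ (ΦS (a * b)) := by
    intro θ
    have hchoice : ∀ b : Sr, ∃ c : S, ∀ s : S, θ (algebraMap S Sr s * b) = Ψ (c * s) := by
      intro b
      exact hΨ
        { toFun := fun s => θ (algebraMap S Sr s * b)
          map_add' := fun s t => by
            show θ (algebraMap S Sr (s + t) * b)
              = θ (algebraMap S Sr s * b) + θ (algebraMap S Sr t * b)
            rw [map_add, add_mul, map_add]
          map_smul' := fun r s => by
            show θ (algebraMap S Sr (r • s) * b) = r • θ (algebraMap S Sr s * b)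
            rw [Algebra.smul_def, map_mul (algebraMap S Sr),
              ← IsScalarTower.algebraMap_apply R S Sr,
              mul_assoc, ← Algebra.smul_def, map_smul] }
    let σ : Sr → S := fun b => (hchoice b).choose
    have σ_spec : ∀ (b : Sr) (s : S), θ (algebraMap S Sr s * b) = Ψ (σ b * s) :=
      fun b => (hchoice b).choose_spec
    have σ_add : ∀ b b' : Sr, σ (b + b') = σ b + σ b' := by
      intro b b'
      refine uniqS _ _ fun s => ?_
      rw [← σ_spec, mul_add, map_add, σ_spec, σ_spec, add_mul, map_add]
    have σ_smul : ∀ (t : S) (b : Sr), σ (t • b) = t * σ b := by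
      intro t b
      refine uniqS _ _ fun s => ?_
      have h1 : algebraMap S Sr s * (t • b) = algebraMap S Sr (t * s) * b := by
        rw [Algebra.smul_def, map_mul]; ring
      have h2 : σ b * (t * s) = t * σ b * s := by ring
      rw [← σ_spec, h1, σ_spec, h2]
    obtain ⟨a, ha⟩ := hΦS
      { toFun := σ
        map_add' := σ_add
        map_smul' := fun t b => by
          show σ (t • b) = t • σ b
          rw [σ_smul, smul_eq_mul] }
    refine ⟨a, fun b => ?_⟩
    have h1 : θ b = Ψ (σ b) := by
      have := σ_spec b 1
      rwa [map_one, one_mul, mul_one] at this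
    rw [h1]
    exact congrArg Ψ (ha b)
  ----------------------------------------------------------------
  -- separation for the pairing on Sr (uses part 1)
  ----------------------------------------------------------------
  have sepSr : ∀ c : Sr, (∀ b : Sr, Ψ (ΦS (c * b)) = 0) → c = 0 := by
    intro c hc
    refine dual_injective_aux (R := R) c fun f => ?_
    obtain ⟨a, ha⟩ := part1 f
    rw [ha c, mul_comm]
    exact hc a
  ----------------------------------------------------------------
  -- Part 2 : ΦR ∘ Ψroot generates Hom_R(Sr, R)
  ----------------------------------------------------------------
  have part2 : ∀ θ : Sr →ₗ[R] R, ∃ a : Sr, ∀ b : Sr, θ b = ΦR (Ψroot (a * b)) := by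
    intro θ
    have hchoice : ∀ b : Sr, ∃ c : Rr, ∀ r : Rr, θ (algebraMap Rr Sr r * b) = ΦR (c * r) := by
      intro b
      exact hΦR
        { toFun := fun r => θ (algebraMap Rr Sr r * b)
          map_add' := fun r t => by
            show θ (algebraMap Rr Sr (r + t) * b)
              = θ (algebraMap Rr Sr r * b) + θ (algebraMap Rr Sr t * b)
            rw [map_add, add_mul, map_add]
          map_smul' := fun r₀ r => by
            show θ (algebraMap Rr Sr (r₀ • r) * b) = r₀ • θ (algebraMap Rr Sr r * b)
            rw [Algebra.smul_def, map_mul (algebraMap Rr Sr),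
              ← IsScalarTower.algebraMap_apply R Rr Sr,
              mul_assoc, ← Algebra.smul_def, map_smul] }
    let τ : Sr → Rr := fun b => (hchoice b).choose
    have τ_spec : ∀ (b : Sr) (r : Rr), θ (algebraMap Rr Sr r * b) = ΦR (τ b * r) :=
      fun b => (hchoice b).choose_spec
    have τ_add : ∀ b b' : Sr, τ (b + b') = τ b + τ b' := by
      intro b b'
      refine uniqRr _ _ fun r => ?_
      rw [← τ_spec, mul_add, map_add, τ_spec, τ_spec, add_mul, map_add]
    have τ_semi : ∀ (y : Rr) (b : Sr), τ (algebraMap Rr Sr y * b) = y * τ b := by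
      intro y b
      refine uniqRr _ _ fun r => ?_
      have h1 : algebraMap Rr Sr r * (algebraMap Rr Sr y * b)
          = algebraMap Rr Sr (y * r) * b := by rw [map_mul]; ring
      have h2 : τ b * (y * r) = y * τ b * r := by ring
      rw [← τ_spec, h1, τ_spec, h2]
    -- descend to a map S →ₗ[R] R
    have hθ' : ∃ a0 : S, ∀ s : S, projR (τ (rootS s)) = Ψ (a0 * s) := hΨ
      { toFun := fun s => projR (τ (rootS s))
        map_add' := fun s t => by
          show projR (τ (rootS (s + t))) = projR (τ (rootS s)) + projR (τ (rootS t))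
          rw [rootS_add, τ_add, projR_add]
        map_smul' := fun r s => by
          show projR (τ (rootS (r • s))) = r • projR (τ (rootS s))
          rw [Algebra.smul_def, rootS_alg, τ_semi, projR_mul, projR_root, smul_eq_mul] }
    obtain ⟨a0, ha0⟩ := hθ'
    refine ⟨rootS a0, fun b => ?_⟩
    have key : τ b = Ψroot (rootS a0 * b) := by
      apply frobRr
      rw [Ψroot_pow, projS_mul, projS_root, ← ha0, rootS_proj, projR_spec]
    have h1 : θ b = ΦR (τ b) := by
      have := τ_spec b 1
      rwa [map_one, one_mul, mul_one] at this
    rw [h1, key]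
  ----------------------------------------------------------------
  -- Part 3 : comparison of the two generators
  ----------------------------------------------------------------
  refine ⟨part1, part2, ?_⟩
  -- Ψ ∘ ΦS as an R-linear map
  obtain ⟨v, hv⟩ := part2 (Ψ.comp (ΦS.restrictScalars R))
  have hv' : ∀ b : Sr, Ψ (ΦS b) = ΦR (Ψroot (v * b)) := fun b => hv b
  -- ΦR ∘ Ψroot as an R-linear map
  have Ψroot_add : ∀ X Y : Sr, Ψroot (X + Y) = Ψroot X + Ψroot Y := by
    intro X Y
    apply frobRr
    rw [Ψroot_pow, add_pow_char_pow, Ψroot_pow, Ψroot_pow, projS_add, map_add, map_add]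
  have Ψroot_semi : ∀ (y : Rr) (X : Sr), Ψroot (algebraMap Rr Sr y * X) = y * Ψroot X := by
    intro y X
    apply frobRr
    have keyp : projS (algebraMap Rr Sr y * X) = algebraMap R S (projR y) * projS X := by
      rw [projS_mul]
      congr 1
      apply hSSr
      rw [projS_spec, ← map_pow, ← projR_spec, ← IsScalarTower.algebraMap_apply R S Sr,
        IsScalarTower.algebraMap_apply R Rr Sr]
    rw [Ψroot_pow, keyp, ← Algebra.smul_def, map_smul, mul_pow, Ψroot_pow,
      ← projR_spec, smul_eq_mul, map_mul]
  obtain ⟨w, hw⟩ := part1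
    { toFun := fun b => ΦR (Ψroot b)
      map_add' := fun X Y => by
        show ΦR (Ψroot (X + Y)) = ΦR (Ψroot X) + ΦR (Ψroot Y)
        rw [Ψroot_add, map_add]
      map_smul' := fun r X => by
        show ΦR (Ψroot (r • X)) = r • ΦR (Ψroot X)
        rw [Algebra.smul_def, IsScalarTower.algebraMap_apply R Rr Sr, Ψroot_semi,
          ← Algebra.smul_def, map_smul] }
  have hw' : ∀ b : Sr, ΦR (Ψroot b) = Ψ (ΦS (w * b)) := fun b => hw b
  have hwv : w * v = 1 := by
    have h1 : ∀ b : Sr, Ψ (ΦS ((1 - w * v) * b)) = 0 := by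
      intro b
      have e1 := hv' b
      have e2 := hw' (v * b)
      rw [e2, ← mul_assoc] at e1
      rw [sub_mul, one_mul, map_sub, map_sub, e1, sub_self]
    exact (sub_eq_zero.mp (sepSr _ h1)).symm
  have hvunit : IsUnit v := IsUnit.of_mul_eq_one (a := v) w (by rw [mul_comm]; exact hwv)
  refine ⟨projS v, v, ?_, (projS_spec v).symm, hv'⟩
  refine IsUnit.of_mul_eq_one (projS w) ?_
  rw [← projS_mul, mul_comm, hwv, projS_one]
end

section
/- Let R = F₂[[x,y,z]]/⟨z² + xyz + xy² + x²y⟩ and let S = R[u,v]/⟨u² + xu + x, v² + yv + y, z + xv + yu⟩ ≅ F₂[[u,v]], where the inclusion R ⊆ S = F₂[[u,v]] is determined by x = u + ū, y = v + v̄, z = uv̄ + ūv with ū = u + u²/(1+u), v̄ = v + v²/(1+v). Then the trace map Tr : S → R of the degree-two extension Frac(R) ⊆ Frac(S) satisfies Tr(u) = x, Tr(v) = y, Tr(uv) = xy + z, and its image is the maximal ideal ⟨x, y, z⟩ ⊊ R; in particular Tr is not surjective. -/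
open MvPowerSeries

/-- Artin's wildly ramified `ℤ/2`-action on `S = F₂[[u,v]]`: the involution `σ` with
`σ(u) = u/(1+u)` and `σ(v) = v/(1+v)` (equivalently `σ(u)·(1+u) = u`, `σ(v)·(1+v) = v`),
which is a continuous ring endomorphism; continuity is expressed coefficientwise. -/
def IsArtinInvolution (σ : MvPowerSeries (Fin 2) (ZMod 2) →+* MvPowerSeries (Fin 2) (ZMod 2)) :
    Prop :=
  (∀ s, σ (σ s) = s) ∧
  σ (X 0) * (1 + X 0) = X 0 ∧
  σ (X 1) * (1 + X 1) = X 1 ∧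
  -- continuity: the degree-`d` coefficient of `σ f` only depends on the coefficients of `f`
  -- in degrees `≤ d`
  (∀ (f g : MvPowerSeries (Fin 2) (ZMod 2)) (d : Fin 2 →₀ ℕ),
    (∀ d' : Fin 2 →₀ ℕ, d' ≤ d → coeff d' f = coeff d' g) →
    coeff d (σ f) = coeff d (σ g))

namespace ArtinAux

abbrev S2 : Type := MvPowerSeries (Fin 2) (ZMod 2)

lemma h2 : (1 + 1 : S2) = 0 := by
  have h : ((1 : ZMod 2) + 1) = 0 := by decide
  calc (1 + 1 : S2) = (C (σ := Fin 2) (R := ZMod 2)) (1 + 1) := by rw [map_add, map_one]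
  _ = 0 := by rw [h, map_zero]

/-- order bound predicate: all coefficients in total degree `< k` vanish. -/
def OB (k : ℕ) (g : S2) : Prop :=
  ∀ d : Fin 2 →₀ ℕ, d 0 + d 1 < k → coeff d g = 0

lemma OB_zero {k : ℕ} : OB k (0 : S2) := fun d _ => by simp

lemma OB_mono {j k : ℕ} (h : j ≤ k) {g : S2} (hg : OB k g) : OB j g :=
  fun d hd => hg d (lt_of_lt_of_le hd h)

lemma OB_add {k : ℕ} {g h : S2} (h1 : OB k g) (h2 : OB k h) : OB k (g + h) := by
  intro d hd
  rw [map_add, h1 d hd, h2 d hd, add_zero]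

lemma OB_mul {k l : ℕ} {g h : S2} (h1 : OB k g) (h2 : OB l h) : OB (k + l) (g * h) := by
  intro d hd
  rw [coeff_mul]
  apply Finset.sum_eq_zero
  intro p hp
  rw [Finset.HasAntidiagonal.mem_antidiagonal] at hp
  have e0 : p.1 0 + p.2 0 = d 0 := by rw [← hp]; rfl
  have e1 : p.1 1 + p.2 1 = d 1 := by rw [← hp]; rfl
  rcases (show p.1 0 + p.1 1 < k ∨ p.2 0 + p.2 1 < l by omega) with h | h
  · rw [h1 p.1 h, zero_mul]
  · rw [h2 p.2 h, mul_zero]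

lemma eta2 (d : Fin 2 →₀ ℕ) :
    d = Finsupp.single 0 (d 0) + Finsupp.single 1 (d 1) := by
  ext i
  fin_cases i <;> simp [Finsupp.single_apply]

lemma eqzero_of (d : Fin 2 →₀ ℕ) (h : d 0 + d 1 < 1) : d = 0 := by
  have h0 : d 0 = 0 := by omega
  have h1 : d 1 = 0 := by omega
  rw [eta2 d, h0, h1]; simp

/-- `u^n = (PQ x n).1 + (PQ x n).2 * u` where `u² = x·u + x`. -/
noncomputable def PQ (t : S2) : ℕ → S2 × S2
  | 0 => (1, 0)
  | n + 1 => (t * (PQ t n).2, (PQ t n).1 + t * (PQ t n).2)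

lemma PQ_zero (t : S2) : PQ t 0 = (1, 0) := rfl

lemma PQ_succ (t : S2) (n : ℕ) :
    PQ t (n + 1) = (t * (PQ t n).2, (PQ t n).1 + t * (PQ t n).2) := rfl

lemma PQ_inv (σ : S2 →+* S2) {t : S2} (ht : σ t = t) :
    ∀ n, σ (PQ t n).1 = (PQ t n).1 ∧ σ (PQ t n).2 = (PQ t n).2
  | 0 => by simp [PQ_zero]
  | n + 1 => by
    obtain ⟨ih1, ih2⟩ := PQ_inv σ ht n
    simp [PQ_succ, map_mul, map_add, ht, ih1, ih2]

lemma PQ_pow {t w : S2} (hw : w * w = t * w + t) :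
    ∀ n, w ^ n = (PQ t n).1 + (PQ t n).2 * w
  | 0 => by simp [PQ_zero]
  | n + 1 => by
    rw [pow_succ, PQ_pow hw n, PQ_succ]
    linear_combination (PQ t n).2 * hw

lemma PQ_OB {t : S2} (ht : OB 1 t) :
    ∀ n, OB (n / 2) (PQ t n).1 ∧ OB ((n - 1) / 2) (PQ t n).2
  | 0 => by
    constructor <;> intro d hd <;> simp at hd
  | n + 1 => by
    obtain ⟨ih1, ih2⟩ := PQ_OB ht n
    rw [PQ_succ]
    constructor
    · exact OB_mono (by omega) (OB_mul ht ih2)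
    · exact OB_add (OB_mono (by omega) ih1) (OB_mono (by omega) (OB_mul ht ih2))

/-- partial sums of a double family of power series -/
noncomputable def psum (g : ℕ → ℕ → S2) (N : ℕ) : S2 :=
  ∑ nm ∈ Finset.range N ×ˢ Finset.range N, g nm.1 nm.2

/-- coefficientwise limit of the partial sums -/
noncomputable def limS (g : ℕ → ℕ → S2) : S2 :=
  fun d => coeff d (psum g (2 * (d 0 + d 1) + 4))

/-- uniform order bound on the family, guaranteeing convergence -/
def GoodOB (g : ℕ → ℕ → S2) : Prop :=
  ∀ n m, OB ((n - 1) / 2 + (m - 1) / 2) (g n m)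

lemma coeff_limS (g : ℕ → ℕ → S2) (d : Fin 2 →₀ ℕ) :
    coeff d (limS g) = coeff d (psum g (2 * (d 0 + d 1) + 4)) := rfl

lemma psum_stab {g : ℕ → ℕ → S2} (hg : GoodOB g) {d : Fin 2 →₀ ℕ} {M N : ℕ}
    (hM : 2 * (d 0 + d 1) + 4 ≤ M) (hMN : M ≤ N) :
    coeff d (psum g N) = coeff d (psum g M) := by
  unfold psum
  rw [map_sum, map_sum]
  symm
  apply Finset.sum_subset
  · exact Finset.product_subset_product (Finset.range_subset_range.2 hMN)
      (Finset.range_subset_range.2 hMN)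
  · intro p hpN hpM
    simp only [Finset.mem_product, Finset.mem_range] at hpN hpM
    apply hg p.1 p.2 d
    omega

lemma limS_agree {g : ℕ → ℕ → S2} (hg : GoodOB g) (d : Fin 2 →₀ ℕ) {N : ℕ}
    (hN : 2 * (d 0 + d 1) + 4 ≤ N) :
    coeff d (limS g) = coeff d (psum g N) := by
  rw [coeff_limS]
  exact (psum_stab hg le_rfl hN).symm

lemma limS_agree_le {g : ℕ → ℕ → S2} (hg : GoodOB g) {d d' : Fin 2 →₀ ℕ} (h : d' ≤ d) :
    coeff d' (limS g) =
      coeff d' (psum g (2 * (d 0 + d 1) + 4)) := by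
  apply limS_agree hg d'
  have h0 := (Finsupp.le_def.mp h) 0
  have h1 := (Finsupp.le_def.mp h) 1
  omega

lemma limS_inv (σ : S2 →+* S2)
    (cont : ∀ (f g : S2) (d : Fin 2 →₀ ℕ),
      (∀ d' : Fin 2 →₀ ℕ, d' ≤ d → coeff d' f = coeff d' g) →
      coeff d (σ f) = coeff d (σ g))
    {g : ℕ → ℕ → S2} (hg : GoodOB g) (hinv : ∀ n m, σ (g n m) = g n m) :
    σ (limS g) = limS g := by
  ext d
  rw [cont (limS g) (psum g (2 * (d 0 + d 1) + 4)) d (fun d' hd' => limS_agree_le hg hd')]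
  have hfix : σ (psum g (2 * (d 0 + d 1) + 4)) = psum g (2 * (d 0 + d 1) + 4) := by
    unfold psum
    rw [map_sum]
    exact Finset.sum_congr rfl fun p _ => hinv p.1 p.2
  rw [hfix, ← limS_agree hg d le_rfl]

lemma coeff_mul_congr {g g' h : S2} {d : Fin 2 →₀ ℕ}
    (hgg' : ∀ d' : Fin 2 →₀ ℕ, d' ≤ d → coeff d' g = coeff d' g') :
    coeff d (g * h) = coeff d (g' * h) := by
  rw [coeff_mul, coeff_mul]
  apply Finset.sum_congr rfl
  intro p hp
  rw [Finset.HasAntidiagonal.mem_antidiagonal] at hp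
  rw [hgg' p.1 (hp ▸ le_self_add)]

lemma decomp (σ : S2 →+* S2) (hσ : IsArtinInvolution σ) (f : S2) :
    ∃ α β γ δ : S2, σ α = α ∧ σ β = β ∧ σ γ = γ ∧ σ δ = δ ∧
      f = α + β * X 0 + γ * X 1 + δ * (X 0 * X 1) := by
  obtain ⟨invol, hu, hv, cont⟩ := hσ
  set xx : S2 := X 0 + σ (X 0) with hxx
  set yy : S2 := X 1 + σ (X 1) with hyy
  have hσx : σ xx = xx := by rw [hxx, map_add, invol, add_comm]
  have hσy : σ yy = yy := by rw [hyy, map_add, invol, add_comm]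
  have hu2 : (X 0 : S2) * X 0 = xx * X 0 + xx := by
    rw [hxx]; linear_combination (-1 : S2) * hu - X 0 * h2
  have hv2 : (X 1 : S2) * X 1 = yy * X 1 + yy := by
    rw [hyy]; linear_combination (-1 : S2) * hv - X 1 * h2
  have ccσu : constantCoeff (σ := Fin 2) (R := ZMod 2) (σ (X 0)) = 0 := by
    have h := congrArg (constantCoeff (σ := Fin 2) (R := ZMod 2)) hu
    simpa [map_mul, map_add, map_one, constantCoeff_X] using h
  have ccσv : constantCoeff (σ := Fin 2) (R := ZMod 2) (σ (X 1)) = 0 := by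
    have h := congrArg (constantCoeff (σ := Fin 2) (R := ZMod 2)) hv
    simpa [map_mul, map_add, map_one, constantCoeff_X] using h
  have OBx : OB 1 xx := by
    intro d hd
    rw [eqzero_of d hd, coeff_zero_eq_constantCoeff]
    simp [hxx, map_add, constantCoeff_X, ccσu]
  have OBy : OB 1 yy := by
    intro d hd
    rw [eqzero_of d hd, coeff_zero_eq_constantCoeff]
    simp [hyy, map_add, constantCoeff_X, ccσv]
  have sigma_C : ∀ a : ZMod 2, σ (C (σ := Fin 2) (R := ZMod 2) a) = C (σ := Fin 2) (R := ZMod 2) a := by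
    intro a
    fin_cases a
    · show σ (C (0 : ZMod 2)) = C 0
      rw [map_zero, map_zero]
    · show σ (C (1 : ZMod 2)) = C 1
      rw [map_one, map_one]
  -- the coefficient family of f
  set cf : ℕ → ℕ → ZMod 2 :=
    fun n m => coeff (Finsupp.single 0 n + Finsupp.single 1 m) f with hcf
  set gA : ℕ → ℕ → S2 :=
    fun n m => C (σ := Fin 2) (R := ZMod 2) (cf n m) * ((PQ xx n).1 * (PQ yy m).1) with hgA
  set gB : ℕ → ℕ → S2 :=
    fun n m => C (σ := Fin 2) (R := ZMod 2) (cf n m) * ((PQ xx n).2 * (PQ yy m).1) with hgB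
  set gC : ℕ → ℕ → S2 :=
    fun n m => C (σ := Fin 2) (R := ZMod 2) (cf n m) * ((PQ xx n).1 * (PQ yy m).2) with hgC
  set gD : ℕ → ℕ → S2 :=
    fun n m => C (σ := Fin 2) (R := ZMod 2) (cf n m) * ((PQ xx n).2 * (PQ yy m).2) with hgD
  have OBC : ∀ a : ZMod 2, OB 0 (C (σ := Fin 2) (R := ZMod 2) a) := fun a d hd => by omega
  have hOBA : GoodOB gA := by
    intro n m
    exact OB_mono (by omega)
      (OB_mul (OBC (cf n m)) (OB_mul (PQ_OB OBx n).1 (PQ_OB OBy m).1))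
  have hOBB : GoodOB gB := by
    intro n m
    exact OB_mono (by omega)
      (OB_mul (OBC (cf n m)) (OB_mul (PQ_OB OBx n).2 (PQ_OB OBy m).1))
  have hOBC : GoodOB gC := by
    intro n m
    exact OB_mono (by omega)
      (OB_mul (OBC (cf n m)) (OB_mul (PQ_OB OBx n).1 (PQ_OB OBy m).2))
  have hOBD : GoodOB gD := by
    intro n m
    exact OB_mono (by omega)
      (OB_mul (OBC (cf n m)) (OB_mul (PQ_OB OBx n).2 (PQ_OB OBy m).2))
  have hinvA : ∀ n m, σ (gA n m) = gA n m := by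
    intro n m
    rw [hgA]
    simp only []
    rw [map_mul, map_mul, sigma_C, (PQ_inv σ hσx n).1, (PQ_inv σ hσy m).1]
  have hinvB : ∀ n m, σ (gB n m) = gB n m := by
    intro n m
    rw [hgB]
    simp only []
    rw [map_mul, map_mul, sigma_C, (PQ_inv σ hσx n).2, (PQ_inv σ hσy m).1]
  have hinvC : ∀ n m, σ (gC n m) = gC n m := by
    intro n m
    rw [hgC]
    simp only []
    rw [map_mul, map_mul, sigma_C, (PQ_inv σ hσx n).1, (PQ_inv σ hσy m).2]
  have hinvD : ∀ n m, σ (gD n m) = gD n m := by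
    intro n m
    rw [hgD]
    simp only []
    rw [map_mul, map_mul, sigma_C, (PQ_inv σ hσx n).2, (PQ_inv σ hσy m).2]
  refine ⟨limS gA, limS gB, limS gC, limS gD,
    limS_inv σ cont hOBA hinvA, limS_inv σ cont hOBB hinvB,
    limS_inv σ cont hOBC hinvC, limS_inv σ cont hOBD hinvD, ?_⟩
  ext d
  set N : ℕ := 2 * (d 0 + d 1) + 4 with hNdef
  have hd0 : d 0 < N := by omega
  have hd1 : d 1 < N := by omega
  -- replace the limits by partial sums
  rw [map_add, map_add, map_add,
    limS_agree_le hOBA (le_refl d),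
    coeff_mul_congr (fun d' hd' => limS_agree_le hOBB hd'),
    coeff_mul_congr (fun d' hd' => limS_agree_le hOBC hd'),
    coeff_mul_congr (fun d' hd' => limS_agree_le hOBD hd'),
    ← map_add, ← map_add, ← map_add]
  have comb : psum gA N + psum gB N * X 0 + psum gC N * X 1 + psum gD N * (X 0 * X 1)
      = psum (fun n m => C (σ := Fin 2) (R := ZMod 2) (cf n m) * (X 0 ^ n * X 1 ^ m)) N := by
    unfold psum
    rw [Finset.sum_mul, Finset.sum_mul, Finset.sum_mul,
      ← Finset.sum_add_distrib, ← Finset.sum_add_distrib, ← Finset.sum_add_distrib]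
    apply Finset.sum_congr rfl
    intro p _
    simp only [hgA, hgB, hgC, hgD]
    rw [PQ_pow hu2 p.1, PQ_pow hv2 p.2]
    ring
  rw [comb]
  unfold psum
  rw [map_sum]
  have hterm : ∀ p : ℕ × ℕ,
      coeff d (C (σ := Fin 2) (R := ZMod 2) (cf p.1 p.2) * (X 0 ^ p.1 * X 1 ^ p.2))
        = if d = Finsupp.single 0 p.1 + Finsupp.single 1 p.2 then cf p.1 p.2 else 0 := by
    intro p
    rw [X_pow_eq, X_pow_eq, monomial_mul_monomial, one_mul,
      show (C (σ := Fin 2) (R := ZMod 2)) (cf p.1 p.2)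
        = monomial (R := ZMod 2) (0 : Fin 2 →₀ ℕ) (cf p.1 p.2) from rfl,
      monomial_mul_monomial, zero_add, mul_one, coeff_monomial]
  rw [Finset.sum_congr rfl fun p _ => hterm p]
  rw [Finset.sum_eq_single ((d 0, d 1) : ℕ × ℕ)]
  · rw [if_pos (eta2 d)]
    exact congrArg (fun e => coeff e f) (eta2 d)
  · intro p _ hne
    rw [if_neg]
    intro hcontra
    apply hne
    have e0 : d 0 = p.1 := by
      rw [hcontra]; simp [Finsupp.single_apply]
    have e1 : d 1 = p.2 := by
      rw [hcontra]; simp [Finsupp.single_apply]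
    rw [Prod.ext_iff]
    exact ⟨e0.symm, e1.symm⟩
  · intro hnotmem
    exfalso
    apply hnotmem
    simp only [Finset.mem_product, Finset.mem_range]
    exact ⟨hd0, hd1⟩

end ArtinAux

open ArtinAux

/-- Artin's example.  Let `S = F₂[[u,v]]` with the wild `ℤ/2`-action `σ`,
and let `R = S^σ` be the invariant subring (a `D₄`-rational double point, presented as
`F₂[[x,y,z]]/(z² + xyz + xy² + x²y)` with `x = u + ū`, `y = v + v̄`, `z = uv̄ + ūv`).
The trace `Tr(s) = s + σ(s)` of the degree-two extension `Frac(R) ⊆ Frac(S)` satisfies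
`Tr(u) = x`, `Tr(v) = y`, `Tr(uv) = xy + z`, takes values in `R`, and its image is exactly
the maximal ideal `⟨x, y, z⟩ ⊊ R`; in particular `Tr` is not surjective onto `R`. -/
theorem artin_example_trace_not_surjective
    (σ : MvPowerSeries (Fin 2) (ZMod 2) →+* MvPowerSeries (Fin 2) (ZMod 2))
    (hσ : IsArtinInvolution σ) :
    -- notation: `u = X 0`, `v = X 1`, `x = u + σ u`, `y = v + σ v`, `z = u·σv + σu·v`,
    -- `Tr s = s + σ s`
    (fun s => s + σ s) (X 0) = X 0 + σ (X 0) ∧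
    (fun s => s + σ s) (X 1) = X 1 + σ (X 1) ∧
    (fun s => s + σ s) (X 0 * X 1) =
      (X 0 + σ (X 0)) * (X 1 + σ (X 1)) + (X 0 * σ (X 1) + σ (X 0) * X 1) ∧
    (∀ s, σ (s + σ s) = s + σ s) ∧
    (Set.range fun s => s + σ s) =
      {w : MvPowerSeries (Fin 2) (ZMod 2) | ∃ a b c, σ a = a ∧ σ b = b ∧ σ c = c ∧
        w = a * (X 0 + σ (X 0)) + b * (X 1 + σ (X 1)) +
            c * (X 0 * σ (X 1) + σ (X 0) * X 1)} ∧
    (Set.range fun s => s + σ s) ≠ {w : MvPowerSeries (Fin 2) (ZMod 2) | σ w = w} := by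
  obtain ⟨invol, hu, hv, cont⟩ := hσ
  have hσ' : IsArtinInvolution σ := ⟨invol, hu, hv, cont⟩
  have hσx : σ (X 0 + σ (X 0)) = X 0 + σ (X 0) := by rw [map_add, invol, add_comm]
  have hrange : (Set.range fun s => s + σ s) =
      {w : MvPowerSeries (Fin 2) (ZMod 2) | ∃ a b c, σ a = a ∧ σ b = b ∧ σ c = c ∧
        w = a * (X 0 + σ (X 0)) + b * (X 1 + σ (X 1)) +
            c * (X 0 * σ (X 1) + σ (X 0) * X 1)} := by
    ext w
    constructor
    · rintro ⟨s, rfl⟩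
      obtain ⟨α, β, γ, δ, hα, hβ, hγ, hδ, hs⟩ := decomp σ hσ' s
      refine ⟨β, γ + δ * (X 0 + σ (X 0)), δ, hβ, ?_, hδ, ?_⟩
      · rw [map_add, map_mul, hγ, hδ, hσx]
      · beta_reduce
        rw [hs, map_add, map_add, map_add, map_mul, map_mul, map_mul, map_mul,
          hα, hβ, hγ, hδ]
        linear_combination (α - δ * (X 0 * σ (X 1) + σ (X 0) * X 1)) * h2
    · rintro ⟨a, b, c, ha, hb, hc, rfl⟩
      refine ⟨a * X 0 + b * X 1 + c * (X 0 * σ (X 1)), ?_⟩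
      beta_reduce
      rw [map_add, map_add, map_mul, map_mul, map_mul, map_mul, ha, hb, hc, invol]
      ring
  refine ⟨rfl, rfl, ?_, ?_, hrange, ?_⟩
  · show X 0 * X 1 + σ (X 0 * X 1) = _
    rw [map_mul]
    linear_combination (-(X 0 * σ (X 1) + σ (X 0) * X 1)) * h2
  · intro s
    rw [map_add, invol, add_comm]
  · intro hEq
    have h1mem : (1 : MvPowerSeries (Fin 2) (ZMod 2)) ∈
        {w : MvPowerSeries (Fin 2) (ZMod 2) | σ w = w} := map_one σ
    rw [← hEq, hrange] at h1mem
    obtain ⟨a, b, c, _, _, _, h1⟩ := h1mem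
    have ccσu : constantCoeff (σ := Fin 2) (R := ZMod 2) (σ (X 0)) = 0 := by
      have h := congrArg (constantCoeff (σ := Fin 2) (R := ZMod 2)) hu
      simpa [map_mul, map_add, map_one, constantCoeff_X] using h
    have ccσv : constantCoeff (σ := Fin 2) (R := ZMod 2) (σ (X 1)) = 0 := by
      have h := congrArg (constantCoeff (σ := Fin 2) (R := ZMod 2)) hv
      simpa [map_mul, map_add, map_one, constantCoeff_X] using h
    have hcc := congrArg (constantCoeff (σ := Fin 2) (R := ZMod 2)) h1
    simp [map_add, map_mul, map_one, constantCoeff_X, ccσu, ccσv] at hcc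
end
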